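/- arXiv:2101.08556 — 17 statements merged into one kernel-verified Lean document; each statement's English description precedes it below -/
import Mathlib

section
/- Suppose that I(B) is a set of local units for A. Then for each n ∈ N(B) the dagger of n is unique: if k₁ and k₂ both satisfy kᵢ·n·kᵢ = kᵢ, n·kᵢ·n = n, and kᵢ·b·n ∈ B and n·b·kᵢ ∈ B for all b ∈ B, then k₁ = k₂. -/
namespace QCP

variable {R : Type*} [CommRing R] {A : Type*} [NonUnitalRing A]
  [Module R A] [SMulCommClass R A A] [IsScalarTower R A A]

/-- `e` is an idempotent element of the subalgebra `B`, i.e. `e ∈ I(B)`. -/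
def IsIdem (B : NonUnitalSubalgebra R A) (e : A) : Prop :=
  e ∈ B ∧ e * e = e

/-- The idempotents of `B` form a set of local units for `A`. -/
def HasLocalUnits (B : NonUnitalSubalgebra R A) : Prop :=
  ∀ F : Finset A, ∃ e : A, IsIdem B e ∧ ∀ a ∈ F, e * a = a ∧ a * e = a

/-- `k` is a dagger for `n` relative to `B`. -/
def IsDagger (B : NonUnitalSubalgebra R A) (n k : A) : Prop :=
  k * n * k = k ∧ n * k * n = n ∧ ∀ b ∈ B, k * b * n ∈ B ∧ n * b * k ∈ B

/-- `n` belongs to the normaliser `N(B)` of `B` in `A`. -/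
def MemNormaliser (B : NonUnitalSubalgebra R A) (n : A) : Prop :=
  ∃ k : A, IsDagger B n k

/-- Condition (WT): `B` is without torsion. -/
def CondWT (B : NonUnitalSubalgebra R A) : Prop :=
  ∀ e : A, e ∈ B → e * e = e → ∀ t : R, t • e = 0 → t = 0 ∨ e = 0

/-- The partial order on `N(B)`: `m ≤ n` iff `m = n·e` for some `e ∈ I(B)`. -/
def NormLE (B : NonUnitalSubalgebra R A) (m n : A) : Prop :=
  ∃ e : A, IsIdem B e ∧ m = n * e

/-- A filter of `N(B)`. -/
def IsFilterOf (B : NonUnitalSubalgebra R A) (U : Set A) : Prop :=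
  (∀ n ∈ U, MemNormaliser B n) ∧ (0 : A) ∉ U ∧
    (∀ m ∈ U, ∀ n : A, MemNormaliser B n → NormLE B m n → n ∈ U) ∧
    (∀ m ∈ U, ∀ n ∈ U, ∃ p ∈ U, NormLE B p m ∧ NormLE B p n)

/-- An ultrafilter of `N(B)`: a filter maximal among filters under inclusion. -/
def IsUltrafilterOf (B : NonUnitalSubalgebra R A) (U : Set A) : Prop :=
  IsFilterOf B U ∧ ∀ V : Set A, IsFilterOf B V → U ⊆ V → U = V

/-- `P` is a conditional expectation from `A` onto `B`. -/
def IsCondExp (B : NonUnitalSubalgebra R A) (P : A →ₗ[R] A) : Prop :=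
  (∀ a : A, P a ∈ B) ∧ (∀ b ∈ B, P b = b) ∧
    (∀ a : A, ∀ b ∈ B, ∀ b' ∈ B, P (b * a * b') = b * P a * b')

/-- The conditional expectation `P` is faithful. -/
def IsFaithful (B : NonUnitalSubalgebra R A) (P : A →ₗ[R] A) : Prop :=
  ∀ a : A, a ≠ 0 → ∃ n : A, MemNormaliser B n ∧ P (n * a) ≠ 0

/-- The conditional expectation `P` is implemented by idempotents. -/
def ImplementedByIdem (B : NonUnitalSubalgebra R A) (P : A →ₗ[R] A) : Prop :=
  ∀ n : A, MemNormaliser B n → ∃ e : A, IsIdem B e ∧ P n = n * e ∧ P n = e * n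

/-- `(A, B)` is an algebraic pair: `B` is commutative, satisfies (WT), `I(B)` is a set of
local units for `A`, `B` is spanned by `I(B)`, `A` is spanned by `N(B)`, and there is a
faithful conditional expectation `A → B`. -/
def IsAlgebraicPair (B : NonUnitalSubalgebra R A) : Prop :=
  (∀ x ∈ B, ∀ y ∈ B, x * y = y * x) ∧ CondWT B ∧ HasLocalUnits B ∧
    (B : Set A) = (Submodule.span R {e : A | IsIdem B e} : Set A) ∧
    Submodule.span R {n : A | MemNormaliser B n} = ⊤ ∧
    ∃ P : A →ₗ[R] A, IsCondExp B P ∧ IsFaithful B P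

/-- A free normaliser: an element of `N(B)` that lies in `B` or squares to zero. -/
def IsFreeNormaliser (B : NonUnitalSubalgebra R A) (n : A) : Prop :=
  MemNormaliser B n ∧ (n ∈ B ∨ n * n = 0)

/-- `(A, B)` is an algebraic diagonal pair. -/
def IsDiagonalPair (B : NonUnitalSubalgebra R A) : Prop :=
  IsAlgebraicPair B ∧ Submodule.span R {n : A | IsFreeNormaliser B n} = ⊤

/-- `(A, B)` is an algebraic Cartan pair: `B` is a maximal commutative subalgebra. -/
def IsCartanPair (B : NonUnitalSubalgebra R A) : Prop :=
  IsAlgebraicPair B ∧ ∀ a : A, (∀ b ∈ B, a * b = b * a) → a ∈ B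

/-- `(A, B)` is an algebraic quasi-Cartan pair. -/
def IsQuasiCartanPair (B : NonUnitalSubalgebra R A) : Prop :=
  IsAlgebraicPair B ∧
    ∃ P : A →ₗ[R] A, IsCondExp B P ∧ IsFaithful B P ∧ ImplementedByIdem B P

end QCP

/-- uniqueness of the dagger when `I(B)` is a set of local units for `A`. -/
theorem dagger_unique {R : Type*} [CommRing R] {A : Type*} [NonUnitalRing A]
    [Module R A] [SMulCommClass R A A] [IsScalarTower R A A]
    (B : NonUnitalSubalgebra R A)
    (hcomm : ∀ x ∈ B, ∀ y ∈ B, x * y = y * x)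
    (hlu : QCP.HasLocalUnits B)
    (n : A) (hn : QCP.MemNormaliser B n)
    (k₁ k₂ : A) (h₁ : QCP.IsDagger B n k₁) (h₂ : QCP.IsDagger B n k₂) :
    k₁ = k₂ := by
  classical
  obtain ⟨e, ⟨heB, _⟩, he⟩ := hlu {n, k₁, k₂}
  have hen : e * n = n ∧ n * e = n := he n (by simp)
  have hek₁ : e * k₁ = k₁ ∧ k₁ * e = k₁ := he k₁ (by simp)
  have hek₂ : e * k₂ = k₂ ∧ k₂ * e = k₂ := he k₂ (by simp)
  have hk₁n : k₁ * n ∈ B := by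
    have := (h₁.2.2 e heB).1
    rwa [mul_assoc, hen.1] at this
  have hnk₁ : n * k₁ ∈ B := by
    have := (h₁.2.2 e heB).2
    rwa [hen.2] at this
  have hk₂n : k₂ * n ∈ B := by
    have := (h₂.2.2 e heB).1
    rwa [mul_assoc, hen.1] at this
  have hnk₂ : n * k₂ ∈ B := by
    have := (h₂.2.2 e heB).2
    rwa [hen.2] at this
  have key₁ : k₁ = k₂ * n * k₁ := by
    calc k₁ = k₁ * n * k₁ := h₁.1.symm
    _ = k₁ * (n * k₂ * n) * k₁ := by rw [h₂.2.1]
    _ = (k₁ * n) * (k₂ * n) * k₁ := by noncomm_ring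
    _ = (k₂ * n) * (k₁ * n) * k₁ := by rw [hcomm _ hk₁n _ hk₂n]
    _ = k₂ * (n * k₁ * n) * k₁ := by noncomm_ring
    _ = k₂ * n * k₁ := by rw [h₁.2.1]
  have key₂ : k₂ = k₂ * n * k₁ := by
    calc k₂ = k₂ * n * k₂ := h₂.1.symm
    _ = k₂ * (n * k₁ * n) * k₂ := by rw [h₁.2.1]
    _ = k₂ * ((n * k₁) * (n * k₂)) := by noncomm_ring
    _ = k₂ * ((n * k₂) * (n * k₁)) := by rw [hcomm _ hnk₁ _ hnk₂]
    _ = (k₂ * n * k₂) * (n * k₁) := by noncomm_ring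
    _ = k₂ * n * k₁ := by rw [h₂.1]; noncomm_ring
  rw [key₁, ← key₂]
end

section
/- Suppose that I(B) is a set of local units for A. If n, m ∈ N(B) with daggers k and l respectively, then n·m ∈ N(B) and l·k is a dagger for n·m; that is, (n·m)·(l·k)·(n·m) = n·m, (l·k)·(n·m)·(l·k) = l·k, and (l·k)·b·(n·m) ∈ B and (n·m)·b·(l·k) ∈ B for all b ∈ B. -/
/-- `N(B)` is closed under multiplication, with `l·k` a dagger for `n·m`. -/
theorem normaliser_mul {R : Type*} [CommRing R] {A : Type*} [NonUnitalRing A]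
    [Module R A] [SMulCommClass R A A] [IsScalarTower R A A]
    (B : NonUnitalSubalgebra R A)
    (hcomm : ∀ x ∈ B, ∀ y ∈ B, x * y = y * x)
    (hlu : QCP.HasLocalUnits B)
    (n m k l : A) (hk : QCP.IsDagger B n k) (hl : QCP.IsDagger B m l) :
    QCP.MemNormaliser B (n * m) ∧ QCP.IsDagger B (n * m) (l * k) := by
  classical
  obtain ⟨e, ⟨heB, _⟩, he⟩ := hlu {n, m, k, l}
  have hne : n * e = n := (he n (by simp)).2
  have hke : k * e = k := (he k (by simp)).2
  have hme : m * e = m := (he m (by simp)).2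
  have hle : l * e = l := (he l (by simp)).2
  have hkn : k * n ∈ B := by have := (hk.2.2 e heB).1; rwa [hke] at this
  have hml : m * l ∈ B := by have := (hl.2.2 e heB).2; rwa [hme] at this
  have comm1 : (m * l) * (k * n) = (k * n) * (m * l) := hcomm _ hml _ hkn
  have eq1 : n * m * (l * k) * (n * m) = n * m := by
    calc n * m * (l * k) * (n * m) = n * ((m * l) * (k * n)) * m := by noncomm_ring
      _ = n * ((k * n) * (m * l)) * m := by rw [comm1]
      _ = (n * k * n) * (m * l * m) := by noncomm_ring
      _ = n * m := by rw [hk.2.1, hl.2.1]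
  have eq2 : l * k * (n * m) * (l * k) = l * k := by
    calc l * k * (n * m) * (l * k) = l * ((k * n) * (m * l)) * k := by noncomm_ring
      _ = l * ((m * l) * (k * n)) * k := by rw [← comm1]
      _ = (l * m * l) * (k * n * k) := by noncomm_ring
      _ = l * k := by rw [hl.1, hk.1]
  have hdag : QCP.IsDagger B (n * m) (l * k) := by
    refine ⟨eq2, eq1, fun b hb => ⟨?_, ?_⟩⟩
    · have h : l * k * b * (n * m) = l * (k * b * n) * m := by noncomm_ring
      rw [h]
      exact (hl.2.2 _ (hk.2.2 b hb).1).1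
    · have h : n * m * b * (l * k) = n * (m * b * l) * k := by noncomm_ring
      rw [h]
      exact (hk.2.2 _ (hl.2.2 b hb).2).2
  exact ⟨⟨l * k, hdag⟩, hdag⟩
end

section
/- Suppose that I(B) is a set of local units for A. Then the idempotent elements of N(B) are precisely the elements of I(B): if n ∈ N(B) satisfies n·n = n, then n ∈ B (so n ∈ I(B)); and conversely every e ∈ I(B) belongs to N(B) with e itself a dagger for e. -/
/-- the idempotent elements of `N(B)` are precisely the elements of `I(B)`. -/
theorem normaliser_idempotents {R : Type*} [CommRing R] {A : Type*} [NonUnitalRing A]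
    [Module R A] [SMulCommClass R A A] [IsScalarTower R A A]
    (B : NonUnitalSubalgebra R A)
    (hcomm : ∀ x ∈ B, ∀ y ∈ B, x * y = y * x)
    (hlu : QCP.HasLocalUnits B) :
    (∀ n : A, QCP.MemNormaliser B n → n * n = n → n ∈ B) ∧
      (∀ e : A, QCP.IsIdem B e → QCP.IsDagger B e e) := by
  classical
  constructor
  · rintro n ⟨k, hknk, hnkn, hB⟩ hnn
    obtain ⟨e, ⟨heB, -⟩, he⟩ := hlu {n, k}
    have hen : e * n = n := (he n (by simp)).1
    have hek : e * k = k := (he k (by simp)).1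
    have hf : k * n ∈ B := by
      have h := (hB e heB).1
      rwa [mul_assoc, hen] at h
    have hg : n * k ∈ B := by
      have h := (hB e heB).2
      rwa [mul_assoc, hek] at h
    have hfg : k * n * (n * k) = k := by
      rw [mul_assoc, ← mul_assoc n n k, hnn, ← mul_assoc, hknk]
    have hgf : n * k * (k * n) = k := by
      rw [hcomm _ hg _ hf, hfg]
    have h1 : n * k * (k * n) * n = k * n := by rw [hgf]
    have h2 : n * k * (k * n) * n = k := by
      rw [mul_assoc (n * k) (k * n) n, mul_assoc k n n, hnn, hgf]
    have hfk : k * n = k := h1.symm.trans h2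
    have h3 : n * k = n := by
      have h := hnkn
      rwa [mul_assoc, hfk] at h
    rw [← h3]
    exact hg
  · rintro e ⟨heB, hee⟩
    refine ⟨by rw [hee, hee], by rw [hee, hee], fun b hb => ?_⟩
    exact ⟨mul_mem (mul_mem heB hb) heB, mul_mem (mul_mem heB hb) heB⟩
end

section
/- Suppose that B satisfies condition (WT) and that I(B) is a set of local units for A. Let e ∈ I(B) and n ∈ N(B) with dagger n†. Then n − n·e ∈ N(B) with dagger n† − e·n†, and n − e·n ∈ N(B) with dagger n† − n†·e; moreover n†·n − n†·n·e ∈ I(B) and n − n·e = n·(n†·n − n†·n·e), so that n − n·e ≤ n, and similarly n − e·n ≤ n. -/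
/-- `n − n·e` and `n − e·n` are normalisers with the indicated daggers,
and they lie below `n`. -/
theorem normaliser_sub_mul_idem {R : Type*} [CommRing R] {A : Type*} [NonUnitalRing A]
    [Module R A] [SMulCommClass R A A] [IsScalarTower R A A]
    (B : NonUnitalSubalgebra R A)
    (hcomm : ∀ x ∈ B, ∀ y ∈ B, x * y = y * x)
    (hWT : QCP.CondWT B)
    (hlu : QCP.HasLocalUnits B)
    (e n k : A) (he : QCP.IsIdem B e) (hk : QCP.IsDagger B n k) :
    QCP.IsDagger B (n - n * e) (k - e * k) ∧
      QCP.IsDagger B (n - e * n) (k - k * e) ∧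
      QCP.IsIdem B (k * n - k * n * e) ∧
      n - n * e = n * (k * n - k * n * e) ∧
      QCP.NormLE B (n - n * e) n ∧
      QCP.NormLE B (n - e * n) n := by
  classical
  obtain ⟨heB, hee⟩ := he
  obtain ⟨hk1, hk2, hk3⟩ := hk
  -- a local unit for {n, k}
  obtain ⟨u, ⟨huB, _⟩, hu⟩ := hlu {n, k}
  have hun : u * n = n := (hu n (by simp)).1
  have hnu : n * u = n := (hu n (by simp)).2
  have hku : k * u = k := (hu k (by simp)).2
  have hknB : k * n ∈ B := by
    have h := (hk3 u huB).1
    rwa [hku] at h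
  have hc1 : k * n * e = e * (k * n) := hcomm _ hknB _ heB
  have hnkB : n * k ∈ B := by
    have h := (hk3 u huB).2
    rwa [hnu] at h
  have hc2 : n * k * e = e * (n * k) := hcomm _ hnkB _ heB
  -- rewrite rules
  have s1 : k*(n*k) = k := by rw [← mul_assoc, hk1]
  have s1' : ∀ x, k*(n*(k*x)) = k*x := fun x => by
    rw [← mul_assoc, ← mul_assoc, hk1]
  have s2 : n*(k*n) = n := by rw [← mul_assoc, hk2]
  have s2' : ∀ x, n*(k*(n*x)) = n*x := fun x => by
    rw [← mul_assoc, ← mul_assoc, hk2]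
  have s3' : ∀ x : A, e*(e*x) = e*x := fun x => by rw [← mul_assoc, hee]
  have s4 : k*(n*e) = e*(k*n) := by rw [← mul_assoc, hc1]
  have s4' : ∀ x, k*(n*(e*x)) = e*(k*(n*x)) := fun x => by
    simp only [← mul_assoc]; rw [hc1]; simp only [mul_assoc]
  have s5 : n*(k*e) = e*(n*k) := by rw [← mul_assoc, hc2]
  have s5' : ∀ x, n*(k*(e*x)) = e*(n*(k*x)) := fun x => by
    simp only [← mul_assoc]; rw [hc2]; simp only [mul_assoc]
  have L6 : k*e*n*k = k*e := by
    rw [mul_assoc k e n, mul_assoc k (e*n) k, mul_assoc e n k, ← hc2,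
      ← mul_assoc, ← mul_assoc, hk1]
  have s6 : k*(e*(n*k)) = k*e := by simp only [← mul_assoc]; exact L6
  have s6' : ∀ x, k*(e*(n*(k*x))) = k*(e*x) := fun x => by
    simp only [← mul_assoc]; rw [L6]
  have L7 : n*e*k*n = n*e := by
    rw [mul_assoc n e k, mul_assoc n (e*k) n, mul_assoc e k n, ← hc1,
      ← mul_assoc, ← mul_assoc, hk2]
  have s7 : n*(e*(k*n)) = n*e := by simp only [← mul_assoc]; exact L7
  have s7' : ∀ x, n*(e*(k*(n*x))) = n*(e*x) := fun x => by
    simp only [← mul_assoc]; rw [L7]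
  refine ⟨⟨?_, ?_, ?_⟩, ⟨?_, ?_, ?_⟩, ⟨?_, ?_⟩, ?_, ?_, ?_⟩
  · simp only [mul_sub, sub_mul, mul_assoc, hee, s1, s1', s2, s2', s3', s4, s4', s5, s5', s6, s6', s7, s7']
    abel
  · simp only [mul_sub, sub_mul, mul_assoc, hee, s1, s1', s2, s2', s3', s4, s4', s5, s5', s6, s6', s7, s7']
    abel
  · intro b hb
    constructor
    · have hmain : (k - e*k) * b * (n - n*e)
          = k*b*n - k*b*n*e - e*(k*b*n) + e*(k*b*n)*e := by
        simp only [mul_sub, sub_mul, mul_assoc]; abel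
      rw [hmain]
      have h1 : k*b*n ∈ B := (hk3 b hb).1
      exact B.add_mem (B.sub_mem (B.sub_mem h1 (B.mul_mem h1 heB))
        (B.mul_mem heB h1)) (B.mul_mem (B.mul_mem heB h1) heB)
    · have hmain : (n - n*e) * b * (k - e*k)
          = n*b*k - n*(b*e)*k - n*(e*b)*k + n*(e*(b*e))*k := by
        simp only [mul_sub, sub_mul, mul_assoc]; abel
      rw [hmain]
      exact B.add_mem (B.sub_mem (B.sub_mem ((hk3 b hb).2)
        ((hk3 _ (B.mul_mem hb heB)).2)) ((hk3 _ (B.mul_mem heB hb)).2))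
        ((hk3 _ (B.mul_mem heB (B.mul_mem hb heB))).2)
  · simp only [mul_sub, sub_mul, mul_assoc, hee, s1, s1', s2, s2', s3', s4, s4', s5, s5', s6, s6', s7, s7']
    abel
  · simp only [mul_sub, sub_mul, mul_assoc, hee, s1, s1', s2, s2', s3', s4, s4', s5, s5', s6, s6', s7, s7']
    abel
  · intro b hb
    constructor
    · have hmain : (k - k*e) * b * (n - e*n)
          = k*b*n - k*(b*e)*n - k*(e*b)*n + k*(e*(b*e))*n := by
        simp only [mul_sub, sub_mul, mul_assoc]; abel
      rw [hmain]
      exact B.add_mem (B.sub_mem (B.sub_mem ((hk3 b hb).1)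
        ((hk3 _ (B.mul_mem hb heB)).1)) ((hk3 _ (B.mul_mem heB hb)).1))
        ((hk3 _ (B.mul_mem heB (B.mul_mem hb heB))).1)
    · have hmain : (n - e*n) * b * (k - k*e)
          = n*b*k - n*b*k*e - e*(n*b*k) + e*(n*b*k)*e := by
        simp only [mul_sub, sub_mul, mul_assoc]; abel
      rw [hmain]
      have h1 : n*b*k ∈ B := (hk3 b hb).2
      exact B.add_mem (B.sub_mem (B.sub_mem h1 (B.mul_mem h1 heB))
        (B.mul_mem heB h1)) (B.mul_mem (B.mul_mem heB h1) heB)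
  · exact B.sub_mem hknB (B.mul_mem hknB heB)
  · simp only [mul_sub, sub_mul, mul_assoc, hee, s1, s1', s2, s2', s3', s4, s4', s5, s5', s6, s6', s7, s7']
    abel
  · have : n * (k*n - k*n*e) = n - n*e := by
      simp only [mul_sub, sub_mul, mul_assoc, hee, s1, s1', s2, s2', s3', s4, s4', s5, s5', s6, s6', s7, s7']
    exact this.symm
  · refine ⟨k*n - k*n*e, ⟨B.sub_mem hknB (B.mul_mem hknB heB), ?_⟩, ?_⟩
    · simp only [mul_sub, sub_mul, mul_assoc, hee, s1, s1', s2, s2', s3', s4, s4', s5, s5', s6, s6', s7, s7']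
      abel
    · have : n * (k*n - k*n*e) = n - n*e := by
        simp only [mul_sub, sub_mul, mul_assoc, hee, s1, s1', s2, s2', s3', s4, s4', s5, s5', s6, s6', s7, s7']
      exact this.symm
  · have hkenB : k*e*n ∈ B := (hk3 e heB).1
    refine ⟨k*n - k*e*n, ⟨B.sub_mem hknB hkenB, ?_⟩, ?_⟩
    · simp only [mul_sub, sub_mul, mul_assoc, hee, s1, s1', s2, s2', s3', s4, s4', s5, s5', s6, s6', s7, s7']
      abel
    · have : n * (k*n - k*e*n) = n - e*n := by
        simp only [mul_sub, sub_mul, mul_assoc, hee, s1, s1', s2, s2', s3', s4, s4', s5, s5', s6, s6', s7, s7']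
      exact this.symm
end

section
/- Suppose that B satisfies condition (WT) and that I(B) is a set of local units for A. Let U be an ultrafilter of N(B) and let n ∈ U. If e₁, …, e_k ∈ I(B) are pairwise orthogonal idempotents (eᵢ·eⱼ = 0 for i ≠ j) satisfying n = Σᵢ₌₁ᵏ n·eᵢ, then there exists a unique index i with n·eᵢ ∈ U. Dually, if f₁, …, f_k ∈ I(B) are pairwise orthogonal idempotents with n = Σᵢ₌₁ᵏ fᵢ·n, then fᵢ·n ∈ U for a unique index i. -/
section UltraAux

open QCP

variable {R : Type*} [CommRing R] {A : Type*} [NonUnitalRing A]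
  [Module R A] [SMulCommClass R A A] [IsScalarTower R A A]
  {B : NonUnitalSubalgebra R A}

private lemma mid_comm (hcomm : ∀ x ∈ B, ∀ y ∈ B, x * y = y * x)
    {b c : A} (hb : b ∈ B) (hc : c ∈ B) (x : A) :
    x * b * c = x * c * b := by
  rw [mul_assoc, hcomm b hb c hc, ← mul_assoc]

private lemma isIdem_mul' (hcomm : ∀ x ∈ B, ∀ y ∈ B, x * y = y * x)
    {a b : A} (ha : QCP.IsIdem B a) (hb : QCP.IsIdem B b) : QCP.IsIdem B (a * b) := by
  refine ⟨mul_mem ha.1 hb.1, ?_⟩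
  calc a * b * (a * b) = a * (b * a) * b := by simp only [mul_assoc]
    _ = a * (a * b) * b := by rw [hcomm b hb.1 a ha.1]
    _ = a * a * (b * b) := by simp only [mul_assoc]
    _ = a * b := by rw [ha.2, hb.2]

private lemma normLE_trans (hcomm : ∀ x ∈ B, ∀ y ∈ B, x * y = y * x)
    {p m q : A} (h1 : QCP.NormLE B p m) (h2 : QCP.NormLE B m q) :
    QCP.NormLE B p q := by
  obtain ⟨f, hf, rfl⟩ := h1
  obtain ⟨g, hg, rfl⟩ := h2
  exact ⟨g * f, isIdem_mul' hcomm hg hf, mul_assoc q g f⟩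

private lemma dagger_good (hlu : QCP.HasLocalUnits B)
    {n : A} (hn : QCP.MemNormaliser B n) :
    ∃ d : A, QCP.IsDagger B n d ∧ d * n ∈ B ∧ n * d ∈ B := by
  classical
  obtain ⟨d, hd⟩ := hn
  obtain ⟨u, hu, hloc⟩ := hlu {n, d}
  have hn' := hloc n (by simp)
  have hd' := hloc d (by simp)
  refine ⟨d, hd, ?_, ?_⟩
  · have := (hd.2.2 u hu.1).1
    rwa [hd'.2] at this
  · have := (hd.2.2 u hu.1).2
    rwa [hn'.2] at this

private lemma memNorm_mul_idem (hcomm : ∀ x ∈ B, ∀ y ∈ B, x * y = y * x)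
    (hlu : QCP.HasLocalUnits B) {n ee : A}
    (hn : QCP.MemNormaliser B n) (he : QCP.IsIdem B ee) :
    QCP.MemNormaliser B (n * ee) := by
  obtain ⟨d, ⟨hd1, hd2, hd3⟩, hdn, hnd⟩ := dagger_good hlu hn
  obtain ⟨heB, he2⟩ := he
  refine ⟨ee * d, ?_, ?_, ?_⟩
  · calc ee * d * (n * ee) * (ee * d)
        = ee * (d * n) * (ee * (ee * d)) := by simp only [mul_assoc]
      _ = ee * (d * n) * (ee * ee * d) := by rw [← mul_assoc ee ee d]
      _ = ee * (d * n) * (ee * d) := by rw [he2]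
      _ = ee * (d * n) * ee * d := by rw [← mul_assoc (ee * (d * n)) ee d]
      _ = ee * ee * (d * n) * d := by rw [mid_comm hcomm hdn heB ee]
      _ = ee * (d * n) * d := by rw [he2]
      _ = ee * (d * n * d) := by rw [mul_assoc ee (d * n) d]
      _ = ee * d := by rw [hd1]
  · calc n * ee * (ee * d) * (n * ee)
        = n * (ee * ee) * (d * n) * ee := by simp only [mul_assoc]
      _ = n * ee * (d * n) * ee := by rw [he2]
      _ = n * ee * ee * (d * n) := by rw [mid_comm hcomm hdn heB (n * ee)]
      _ = n * (ee * ee) * (d * n) := by rw [mul_assoc n ee ee]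
      _ = n * ee * (d * n) := by rw [he2]
      _ = n * (d * n) * ee := by rw [mid_comm hcomm heB hdn n]
      _ = n * d * n * ee := by rw [← mul_assoc n d n]
      _ = n * ee := by rw [hd2]
  · intro b hb
    constructor
    · have h : ee * d * b * (n * ee) = ee * (d * b * n) * ee := by
        simp only [mul_assoc]
      rw [h]
      exact mul_mem (mul_mem heB (hd3 b hb).1) heB
    · have h : n * ee * b * (ee * d) = n * (ee * b * ee) * d := by
        simp only [mul_assoc]
      rw [h]
      exact (hd3 (ee * b * ee) (mul_mem (mul_mem heB hb) heB)).2

private lemma filter_directed (hcomm : ∀ x ∈ B, ∀ y ∈ B, x * y = y * x)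
    {U : Set A} (hUF : QCP.IsFilterOf B U) {n : A} (hn : n ∈ U) :
    ∀ (m : ℕ) (q : Fin m → A), (∀ i, q i ∈ U) →
      ∃ p ∈ U, QCP.NormLE B p n ∧ ∀ i, QCP.NormLE B p (q i) := by
  intro m
  induction m with
  | zero =>
    intro q _
    obtain ⟨p, hp, h1, -⟩ := hUF.2.2.2 n hn n hn
    exact ⟨p, hp, h1, fun i => i.elim0⟩
  | succ m ih =>
    intro q hq
    obtain ⟨p, hpU, hpn, hpq⟩ := ih (fun i => q i.succ) (fun i => hq i.succ)
    obtain ⟨p', hp'U, hp'p, hp'q0⟩ := hUF.2.2.2 p hpU (q 0) (hq 0)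
    refine ⟨p', hp'U, normLE_trans hcomm hp'p hpn, fun i => ?_⟩
    exact Fin.cases hp'q0 (fun j => normLE_trans hcomm hp'p (hpq j)) i

private lemma part1 (B : NonUnitalSubalgebra R A)
    (hcomm : ∀ x ∈ B, ∀ y ∈ B, x * y = y * x)
    (hlu : QCP.HasLocalUnits B)
    (U : Set A) (hU : QCP.IsUltrafilterOf B U)
    (n : A) (hn : n ∈ U) (k : ℕ) (e : Fin k → A)
    (hid : ∀ i, QCP.IsIdem B (e i))
    (horth : ∀ i j, i ≠ j → e i * e j = 0)
    (hsum : n = ∑ i, n * e i) :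
    ∃! i : Fin k, n * e i ∈ U := by
  obtain ⟨hUF, hUmax⟩ := hU
  obtain ⟨hUnorm, hU0, hUup, hUdir⟩ := hUF
  have hnN : QCP.MemNormaliser B n := hUnorm n hn
  -- uniqueness
  have huniq : ∀ i j : Fin k, n * e i ∈ U → n * e j ∈ U → i = j := by
    intro i j hi hj
    by_contra hij
    obtain ⟨p, hpU, hpi, hpj⟩ := hUdir _ hi _ hj
    obtain ⟨g, hg, hpg⟩ := hpi
    obtain ⟨h, hh, hph⟩ := hpj
    have h1 : p * e j = 0 := by
      rw [hpg, mid_comm hcomm hg.1 (hid j).1 (n * e i), mul_assoc n (e i) (e j),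
        horth i j hij, mul_zero, zero_mul]
    have h2 : p * e j = p := by
      calc p * e j = n * e j * h * e j := by rw [hph]
        _ = n * e j * e j * h := mid_comm hcomm hh.1 (hid j).1 (n * e j)
        _ = n * (e j * e j) * h := by rw [mul_assoc n (e j) (e j)]
        _ = n * e j * h := by rw [(hid j).2]
        _ = p := hph.symm
    have hp0 : p = 0 := by rw [← h2, h1]
    exact hU0 (hp0 ▸ hpU)
  -- existence: find a good index
  have hkey : ∃ i : Fin k, ∀ g : A, QCP.IsIdem B g → n * g ∈ U → n * e i * g ≠ 0 := by
    by_contra hcon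
    push_neg at hcon
    choose g hg1 hg2 hg3 using hcon
    obtain ⟨p, hpU, hpn, hpq⟩ :=
      filter_directed hcomm ⟨hUnorm, hU0, hUup, hUdir⟩ hn k (fun i => n * g i)
        (fun i => hg2 i)
    obtain ⟨g₀, hg₀, hpg₀⟩ := hpn
    have hpe : ∀ i, p * e i = 0 := by
      intro i
      obtain ⟨h, hh, hph⟩ := hpq i
      calc p * e i = n * g i * h * e i := by rw [hph]
        _ = n * g i * e i * h := mid_comm hcomm hh.1 (hid i).1 (n * g i)
        _ = n * e i * g i * h := by rw [mid_comm hcomm (hg1 i).1 (hid i).1 n]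
        _ = 0 := by rw [hg3 i, zero_mul]
    have hp0 : p = 0 := by
      calc p = n * g₀ := hpg₀
        _ = (∑ i, n * e i) * g₀ := by rw [← hsum]
        _ = ∑ i, n * e i * g₀ := Finset.sum_mul _ _ _
        _ = ∑ i, p * e i := Finset.sum_congr rfl fun i _ => by
              rw [hpg₀]
              exact (mid_comm hcomm hg₀.1 (hid i).1 n).symm
        _ = 0 := Finset.sum_eq_zero fun i _ => hpe i
    exact hU0 (hp0 ▸ hpU)
  obtain ⟨i, hi⟩ := hkey
  -- the filter V
  have hVF : QCP.IsFilterOf B {x | QCP.MemNormaliser B x ∧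
      ∃ g : A, QCP.IsIdem B g ∧ n * g ∈ U ∧ QCP.NormLE B (n * e i * g) x} := by
    refine ⟨fun x hx => hx.1, ?_, ?_, ?_⟩
    · rintro ⟨-, g, hg, hgU, t, ht, h0⟩
      exact hi g hg hgU (by rw [h0, zero_mul])
    · rintro x ⟨hxN, g, hg, hgU, hle⟩ y hyN hxy
      exact ⟨hyN, g, hg, hgU, normLE_trans hcomm hle hxy⟩
    · rintro x1 ⟨hx1N, g1, hg1, hg1U, hle1⟩ x2 ⟨hx2N, g2, hg2, hg2U, hle2⟩
      obtain ⟨p, hpU, hp1, hp2⟩ := hUdir _ hg1U _ hg2U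
      obtain ⟨h1, hh1, hp1e⟩ := hp1
      obtain ⟨h2, hh2, hp2e⟩ := hp2
      have hgh : QCP.IsIdem B (g1 * h1) := isIdem_mul' hcomm hg1 hh1
      have hq1 : n * e i * (g1 * h1) = n * e i * g1 * h1 :=
        (mul_assoc (n * e i) g1 h1).symm
      have hq2 : n * e i * (g1 * h1) = n * e i * g2 * h2 := by
        calc n * e i * (g1 * h1) = n * e i * g1 * h1 := hq1
          _ = n * g1 * e i * h1 := by rw [mid_comm hcomm hg1.1 (hid i).1 n]
          _ = n * g1 * h1 * e i := mid_comm hcomm (hid i).1 hh1.1 (n * g1)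
          _ = n * g2 * h2 * e i := by rw [← hp1e, hp2e]
          _ = n * g2 * e i * h2 := (mid_comm hcomm (hid i).1 hh2.1 (n * g2)).symm
          _ = n * e i * g2 * h2 := by rw [mid_comm hcomm hg2.1 (hid i).1 n]
      refine ⟨n * e i * (g1 * h1), ⟨?_, g1 * h1, hgh, ?_, ?_⟩, ?_, ?_⟩
      · have h : n * e i * (g1 * h1) = n * (e i * (g1 * h1)) := by
          simp only [mul_assoc]
        rw [h]
        exact memNorm_mul_idem hcomm hlu hnN (isIdem_mul' hcomm (hid i) hgh)
      · have h : n * (g1 * h1) = p := by rw [← mul_assoc, ← hp1e]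
        rw [h]; exact hpU
      · exact ⟨g1 * h1, hgh, by rw [mul_assoc (n * e i) (g1 * h1) (g1 * h1), hgh.2]⟩
      · exact normLE_trans hcomm ⟨h1, hh1, hq1⟩ hle1
      · exact normLE_trans hcomm ⟨h2, hh2, hq2⟩ hle2
  have hUV : U ⊆ {x | QCP.MemNormaliser B x ∧
      ∃ g : A, QCP.IsIdem B g ∧ n * g ∈ U ∧ QCP.NormLE B (n * e i * g) x} := by
    intro q hq
    obtain ⟨p, hpU, hpn, hpq⟩ := hUdir n hn q hq
    obtain ⟨g, hg, hpg⟩ := hpn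
    refine ⟨hUnorm q hq, g, hg, by rw [← hpg]; exact hpU, ?_⟩
    refine normLE_trans hcomm ⟨e i, hid i, ?_⟩ hpq
    rw [hpg, mid_comm hcomm hg.1 (hid i).1 n]
  have hUVeq := hUmax _ hVF hUV
  have hmem : n * e i ∈ U := by
    rw [hUVeq]
    obtain ⟨p, hpU, hpn, -⟩ := hUdir n hn n hn
    obtain ⟨g, hg, hpg⟩ := hpn
    exact ⟨memNorm_mul_idem hcomm hlu hnN (hid i), g, hg,
      by rw [← hpg]; exact hpU, ⟨g, hg, rfl⟩⟩
  exact ⟨i, hmem, fun j hj => huniq j i hj hmem⟩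

end UltraAux

/-- if an element of an ultrafilter decomposes along pairwise orthogonal
idempotents, then exactly one summand lies in the ultrafilter. -/
theorem ultrafilter_partition {R : Type*} [CommRing R] {A : Type*} [NonUnitalRing A]
    [Module R A] [SMulCommClass R A A] [IsScalarTower R A A]
    (B : NonUnitalSubalgebra R A)
    (hcomm : ∀ x ∈ B, ∀ y ∈ B, x * y = y * x)
    (hWT : QCP.CondWT B)
    (hlu : QCP.HasLocalUnits B)
    (U : Set A) (hU : QCP.IsUltrafilterOf B U)
    (n : A) (hn : n ∈ U) (k : ℕ) :
    (∀ e : Fin k → A, (∀ i, QCP.IsIdem B (e i)) →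
        (∀ i j, i ≠ j → e i * e j = 0) → n = ∑ i, n * e i →
        ∃! i : Fin k, n * e i ∈ U) ∧
      (∀ f : Fin k → A, (∀ i, QCP.IsIdem B (f i)) →
        (∀ i j, i ≠ j → f i * f j = 0) → n = ∑ i, f i * n →
        ∃! i : Fin k, f i * n ∈ U) := by
  have hnN : QCP.MemNormaliser B n := hU.1.1 n hn
  obtain ⟨d, ⟨hd1, hd2, hd3⟩, hdn, hnd⟩ := dagger_good hlu hnN
  constructor
  · intro e hid horth hsum
    exact part1 B hcomm hlu U hU n hn k e hid horth hsum
  · intro f hid horth hsum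
    have heq : ∀ i, n * (d * f i * n) = f i * n := by
      intro i
      calc n * (d * f i * n) = n * d * f i * n := by simp only [mul_assoc]
        _ = f i * (n * d) * n := by rw [hcomm (n * d) hnd (f i) (hid i).1]
        _ = f i * (n * d * n) := by simp only [mul_assoc]
        _ = f i * n := by rw [hd2]
    have hidE : ∀ i, QCP.IsIdem B (d * f i * n) := by
      intro i
      refine ⟨(hd3 (f i) (hid i).1).1, ?_⟩
      calc d * f i * n * (d * f i * n)
          = d * f i * (n * d) * (f i * n) := by simp only [mul_assoc]
        _ = d * (n * d) * f i * (f i * n) := by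
            rw [mid_comm hcomm (hid i).1 hnd d]
        _ = d * (n * d) * (f i * f i) * n := by simp only [mul_assoc]
        _ = d * (n * d) * f i * n := by rw [(hid i).2]
        _ = d * n * d * f i * n := by rw [← mul_assoc d n d]
        _ = d * f i * n := by rw [hd1]
    have horthE : ∀ i j, i ≠ j → (d * f i * n) * (d * f j * n) = 0 := by
      intro i j hij
      calc d * f i * n * (d * f j * n)
          = d * f i * (n * d) * (f j * n) := by simp only [mul_assoc]
        _ = d * (n * d) * f i * (f j * n) := by
            rw [mid_comm hcomm (hid i).1 hnd d]
        _ = d * (n * d) * (f i * f j) * n := by simp only [mul_assoc]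
        _ = 0 := by rw [horth i j hij, mul_zero, zero_mul]
    have hsumE : n = ∑ i, n * (d * f i * n) := by
      simp only [heq]; exact hsum
    obtain ⟨i, hi, hiu⟩ :=
      part1 B hcomm hlu U hU n hn k (fun i => d * f i * n) hidE horthE hsumE
    refine ⟨i, ?_, fun j hj => hiu j ?_⟩
    · have hi' : n * (d * f i * n) ∈ U := hi
      rwa [heq i] at hi'
    · show n * (d * f j * n) ∈ U
      rw [heq j]; exact hj
end

section
/- Suppose that B satisfies condition (WT) and that I(B) is a set of local units for A. If U is an ultrafilter of N(B) and t is a unit of R, then t•U := {t•m : m ∈ U} is again an ultrafilter of N(B). -/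
lemma memNormaliser_smul {R : Type*} [CommRing R] {A : Type*} [NonUnitalRing A]
    [Module R A] [SMulCommClass R A A] [IsScalarTower R A A]
    (B : NonUnitalSubalgebra R A) (t : Rˣ) {n : A}
    (hn : QCP.MemNormaliser B n) : QCP.MemNormaliser B ((t : R) • n) := by
  obtain ⟨k, hk1, hk2, hk3⟩ := hn
  refine ⟨((t⁻¹ : Rˣ) : R) • k, ?_, ?_, fun b hb => ?_⟩
  · have : ((t⁻¹ : Rˣ) : R) • k * ((t : R) • n) * (((t⁻¹ : Rˣ) : R) • k)
        = (((t⁻¹ : Rˣ) : R) * (t : R) * ((t⁻¹ : Rˣ) : R)) • (k * n * k) := by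
      simp [smul_mul_assoc, mul_smul_comm, smul_smul, mul_assoc, mul_comm, mul_left_comm]
    rw [this, hk1]
    simp [mul_assoc]
  · have : (t : R) • n * (((t⁻¹ : Rˣ) : R) • k) * ((t : R) • n)
        = ((t : R) * ((t⁻¹ : Rˣ) : R) * (t : R)) • (n * k * n) := by
      simp [smul_mul_assoc, mul_smul_comm, smul_smul, mul_assoc, mul_comm, mul_left_comm]
    rw [this, hk2]
    simp [mul_assoc]
  · constructor
    · have : ((t⁻¹ : Rˣ) : R) • k * b * ((t : R) • n)
          = (((t⁻¹ : Rˣ) : R) * (t : R)) • (k * b * n) := by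
        simp [smul_mul_assoc, mul_smul_comm, smul_smul, mul_comm]
      rw [this]
      simpa using (hk3 b hb).1
    · have : (t : R) • n * b * (((t⁻¹ : Rˣ) : R) • k)
          = ((t : R) * ((t⁻¹ : Rˣ) : R)) • (n * b * k) := by
        simp [smul_mul_assoc, mul_smul_comm, smul_smul, mul_comm]
      rw [this]
      simpa using (hk3 b hb).2

lemma normLE_smul {R : Type*} [CommRing R] {A : Type*} [NonUnitalRing A]
    [Module R A] [SMulCommClass R A A] [IsScalarTower R A A]
    (B : NonUnitalSubalgebra R A) (t : R) {m n : A}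
    (h : QCP.NormLE B m n) : QCP.NormLE B (t • m) (t • n) := by
  obtain ⟨e, he, rfl⟩ := h
  exact ⟨e, he, (smul_mul_assoc t n e).symm⟩

lemma filter_smul {R : Type*} [CommRing R] {A : Type*} [NonUnitalRing A]
    [Module R A] [SMulCommClass R A A] [IsScalarTower R A A]
    (B : NonUnitalSubalgebra R A) {U : Set A} (hU : QCP.IsFilterOf B U) (t : Rˣ) :
    QCP.IsFilterOf B ((fun m => (t : R) • m) '' U) := by
  obtain ⟨hnorm, h0, hup, hdir⟩ := hU
  refine ⟨?_, ?_, ?_, ?_⟩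
  · rintro n ⟨m, hm, rfl⟩
    exact memNormaliser_smul B t (hnorm m hm)
  · rintro ⟨m, hm, hm0⟩
    have : m = 0 := by
      have := congrArg (fun x => ((t⁻¹ : Rˣ) : R) • x) hm0
      simpa [smul_smul] using this
    exact h0 (this ▸ hm)
  · rintro m' ⟨m, hm, rfl⟩ n hn hle
    have h1 : QCP.MemNormaliser B (((t⁻¹ : Rˣ) : R) • n) := memNormaliser_smul B t⁻¹ hn
    have h2 : QCP.NormLE B m (((t⁻¹ : Rˣ) : R) • n) := by
      have := normLE_smul B ((t⁻¹ : Rˣ) : R) hle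
      simpa [smul_smul] using this
    refine ⟨((t⁻¹ : Rˣ) : R) • n, hup m hm _ h1 h2, ?_⟩
    simp [smul_smul]
  · rintro m' ⟨m, hm, rfl⟩ n' ⟨n, hn, rfl⟩
    obtain ⟨p, hp, hpm, hpn⟩ := hdir m hm n hn
    exact ⟨(t : R) • p, ⟨p, hp, rfl⟩, normLE_smul B _ hpm, normLE_smul B _ hpn⟩

/-- the scalar translate of an ultrafilter of `N(B)` by a unit of `R`
is again an ultrafilter of `N(B)`. -/
theorem ultrafilter_smul {R : Type*} [CommRing R] {A : Type*} [NonUnitalRing A]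
    [Module R A] [SMulCommClass R A A] [IsScalarTower R A A]
    (B : NonUnitalSubalgebra R A)
    (hcomm : ∀ x ∈ B, ∀ y ∈ B, x * y = y * x)
    (hWT : QCP.CondWT B)
    (hlu : QCP.HasLocalUnits B)
    (U : Set A) (hU : QCP.IsUltrafilterOf B U) (t : Rˣ) :
    QCP.IsUltrafilterOf B ((fun m => (t : R) • m) '' U) := by
  obtain ⟨hF, hmax⟩ := hU
  refine ⟨filter_smul B hF t, fun V hV hsub => ?_⟩
  have hV' : QCP.IsFilterOf B ((fun m => ((t⁻¹ : Rˣ) : R) • m) '' V) := filter_smul B hV t⁻¹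
  have hUsub : U ⊆ (fun m => ((t⁻¹ : Rˣ) : R) • m) '' V := by
    intro m hm
    exact ⟨(t : R) • m, hsub ⟨m, hm, rfl⟩, by simp [smul_smul]⟩
  have hEq := hmax _ hV' hUsub
  ext x
  constructor
  · exact fun h => hsub h
  · intro hx
    have : ((t⁻¹ : Rˣ) : R) • x ∈ U := hEq ▸ ⟨x, hx, rfl⟩
    exact ⟨_, this, by simp [smul_smul]⟩
end

section
/- Suppose that B satisfies condition (WT) and that I(B) is a set of local units for A. If t is a unit of R with t ≠ 1 and n ∈ N(B), then no ultrafilter of N(B) contains both n and t•n. -/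
/-- if `t ∈ Rˣ` with `t ≠ 1`, no ultrafilter of `N(B)` contains both
`n` and `t•n`. -/
theorem ultrafilter_not_mem_smul {R : Type*} [CommRing R] {A : Type*} [NonUnitalRing A]
    [Module R A] [SMulCommClass R A A] [IsScalarTower R A A]
    (B : NonUnitalSubalgebra R A)
    (hcomm : ∀ x ∈ B, ∀ y ∈ B, x * y = y * x)
    (hWT : QCP.CondWT B)
    (hlu : QCP.HasLocalUnits B)
    (t : Rˣ) (ht : (t : R) ≠ 1) (n : A) (hn : QCP.MemNormaliser B n)
    (U : Set A) (hU : QCP.IsUltrafilterOf B U) :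
    ¬(n ∈ U ∧ (t : R) • n ∈ U) := by
  classical
  rintro ⟨hnU, htnU⟩
  obtain ⟨⟨hNorm, h0, hup, hdir⟩, -⟩ := hU
  obtain ⟨p, hpU, ⟨e, ⟨heB, hee⟩, hpe⟩, ⟨f, ⟨hfB, hff⟩, hpf⟩⟩ := hdir n hnU _ htnU
  -- p = n * (e * f) and p = t • (n * (e * f))
  have hp1 : p = n * (e * f) := by
    have : p * f = p := by rw [hpf, mul_assoc, hff]
    rw [← this, hpe, mul_assoc]
  have hp2 : p = (t : R) • p := by
    have hpe' : p * e = p := by rw [hpe, mul_assoc, hee]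
    calc p = p * e := hpe'.symm
      _ = (t : R) • (n * (f * e)) := by rw [hpf, smul_mul_assoc, smul_mul_assoc, mul_assoc]
      _ = (t : R) • p := by rw [hcomm f hfB e heB, ← hp1]
  have hsub : ((1 : R) - (t : R)) • p = 0 := by
    rw [sub_smul, one_smul, ← hp2, sub_self]
  -- get a dagger for p
  obtain ⟨k, hkpk, hpkp, hkB⟩ := hNorm p hpU
  -- local unit for {p, k}
  obtain ⟨u, ⟨huB, huu⟩, hact⟩ := hlu {p, k}
  have hpu : p * u = p := (hact p (by simp)).2
  have huk : u * k = k := (hact k (by simp)).1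
  have hpkB : p * k ∈ B := by
    have := (hkB u huB).2
    rwa [hpu] at this
  have hpkidem : (p * k) * (p * k) = p * k := by
    rw [← mul_assoc, mul_assoc p k p, ← mul_assoc, hpkp]
  have hzero : ((1 : R) - (t : R)) • (p * k) = 0 := by
    rw [← smul_mul_assoc, hsub, zero_mul]
  rcases hWT (p * k) hpkB hpkidem ((1 : R) - (t : R)) hzero with h | h
  · exact ht (sub_eq_zero.mp h).symm
  · have : p = 0 := by rw [← hpkp, h, zero_mul]
    exact h0 (this ▸ hpU)
end

section
/- Suppose that B satisfies condition (WT) and that I(B) is a set of local units for A. If U and W are ultrafilters of N(B) each containing at least one element of I(B), and t, s are units of R with {t•m : m ∈ U} = {s•m : m ∈ W}, then t = s and U = W. -/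
/-- unit-space ultrafilters with equal scalar translates are equal,
with equal scalars. -/
theorem unit_ultrafilter_smul_eq {R : Type*} [CommRing R] {A : Type*} [NonUnitalRing A]
    [Module R A] [SMulCommClass R A A] [IsScalarTower R A A]
    (B : NonUnitalSubalgebra R A)
    (hcomm : ∀ x ∈ B, ∀ y ∈ B, x * y = y * x)
    (hWT : QCP.CondWT B)
    (hlu : QCP.HasLocalUnits B)
    (U W : Set A) (hU : QCP.IsUltrafilterOf B U) (hW : QCP.IsUltrafilterOf B W)
    (hUe : ∃ e ∈ U, QCP.IsIdem B e) (hWe : ∃ e ∈ W, QCP.IsIdem B e)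
    (t s : Rˣ)
    (himg : (fun m => (t : R) • m) '' U = (fun m => (s : R) • m) '' W) :
    t = s ∧ U = W := by
  classical
  obtain ⟨⟨hUnorm, hU0, hUup, hUdir⟩, -⟩ := hU
  obtain ⟨⟨hWnorm, hW0, hWup, hWdir⟩, -⟩ := hW
  obtain ⟨e, heU, heB, hee⟩ := hUe
  obtain ⟨f, hfW, hfB, hff⟩ := hWe
  set c : R := (↑t⁻¹ : R) * (↑s : R) with hc
  set d : R := (↑s⁻¹ : R) * (↑t : R) with hd
  have hdc : d * c = 1 := by
    have h1 : d * c = ((↑s⁻¹ : R) * (↑s : R)) * ((↑t⁻¹ : R) * (↑t : R)) := by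
      rw [hc, hd]; ring
    rw [h1, Units.inv_mul, Units.inv_mul, mul_one]
  -- e = c • w for some w ∈ W
  have hmem : (t : R) • e ∈ (fun m => (s : R) • m) '' W := by
    rw [← himg]; exact ⟨e, heU, rfl⟩
  obtain ⟨w, hwW, hws⟩ := hmem
  have hws' : (s : R) • w = (t : R) • e := hws
  have hew : e = c • w := by
    have h2 : (↑t⁻¹ : R) • ((s : R) • w) = (↑t⁻¹ : R) • ((t : R) • e) := by
      rw [hws']
    rw [smul_smul, smul_smul, Units.inv_mul, one_smul] at h2
    exact h2.symm
  have hwde : w = d • e := by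
    rw [hew, smul_smul]
    have : d * c = 1 := hdc
    rw [this, one_smul]
  obtain ⟨p, hpW, ⟨e1, ⟨he1B, he1i⟩, hp1⟩, ⟨e2, ⟨he2B, he2i⟩, hp2⟩⟩ :=
    hWdir w hwW f hfW
  have hp0 : p ≠ 0 := fun h => hW0 (h ▸ hpW)
  -- q = e * e1 is a nonzero idempotent of B with p = d • q
  set q : A := e * e1 with hq
  have hqB : q ∈ B := B.mul_mem heB he1B
  have hqq : q * q = q := by
    have hcomQ : e1 * e = e * e1 := hcomm e1 he1B e heB
    rw [hq, mul_assoc, ← mul_assoc e1 e e1, hcomQ, mul_assoc, he1i, ← mul_assoc, hee]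
  have hpq : p = d • q := by
    rw [hp1, hwde, smul_mul_assoc]
  have hq0 : q ≠ 0 := by
    intro h
    apply hp0
    rw [hpq, h, smul_zero]
  -- p is idempotent since p = f * e2 with f, e2 commuting idempotents in B
  have hpp : p * p = p := by
    have hcomP : e2 * f = f * e2 := hcomm e2 he2B f hfB
    rw [hp2, mul_assoc, ← mul_assoc e2 f e2, hcomP, mul_assoc, he2i, ← mul_assoc, hff]
  -- derive (d * d - d) • q = 0
  have hkey : (d * d - d) • q = 0 := by
    have h3 : (d * d) • q = d • q := by
      have := hpp
      rw [hpq, smul_mul_assoc, mul_smul_comm, smul_smul, hqq] at this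
      exact this
    rw [sub_smul, h3, sub_self]
  have hdd : d * d - d = 0 := by
    rcases hWT q hqB hqq _ hkey with h | h
    · exact h
    · exact absurd h hq0
  have hd1 : d = 1 := by
    have h4 : d * d = d := sub_eq_zero.mp hdd
    calc d = d * (d * c) := by rw [hdc, mul_one]
    _ = (d * d) * c := by ring
    _ = d * c := by rw [h4]
    _ = 1 := hdc
  have hc1 : c = 1 := by
    have := hdc
    rw [hd1, one_mul] at this
    exact this
  -- t = s
  have hts : (t : R) = (s : R) := by
    have h5 : (↑t : R) * c = (↑t : R) * 1 := by rw [hc1]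
    rw [hc, ← mul_assoc, Units.mul_inv, one_mul, mul_one] at h5
    exact h5.symm
  have htseq : t = s := Units.ext hts
  refine ⟨htseq, ?_⟩
  -- injectivity of scaling by t
  have hinj : Function.Injective (fun m : A => (t : R) • m) := by
    intro x y h
    have h6 := congrArg (fun z => (↑t⁻¹ : R) • z) h
    simpa [smul_smul, Units.inv_mul, one_smul] using h6
  apply hinj.image_injective
  rw [himg, hts]
end

section
/- Every algebraic diagonal pair is an algebraic Cartan pair: if (A,B) is an algebraic diagonal pair, then B is a maximal commutative subalgebra of A, i.e. every a ∈ A that commutes with every element of B belongs to B. -/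
/-- every algebraic diagonal pair is an algebraic Cartan pair. -/
theorem diagonal_pair_is_cartan_pair {R : Type*} [CommRing R] {A : Type*} [NonUnitalRing A]
    [Module R A] [SMulCommClass R A A] [IsScalarTower R A A]
    (B : NonUnitalSubalgebra R A)
    (hD : QCP.IsDiagonalPair B) :
    QCP.IsCartanPair B := by
  classical
  obtain ⟨hAP, hspan⟩ := hD
  refine ⟨hAP, ?_⟩
  obtain ⟨hcomm, hWT, hLU, hBspan, hNspan, P, hCE, hF⟩ := hAP
  intro a ha
  set c : A := a - P a with hc_def
  -- c commutes with B
  have hc : ∀ b ∈ B, c * b = b * c := by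
    intro b hb
    have h1 : a * b = b * a := ha b hb
    have h2 : P a * b = b * P a := hcomm (P a) (hCE.1 a) b hb
    simp [hc_def, sub_mul, mul_sub, h1, h2]
  -- P c = 0
  have hPc : P c = 0 := by
    have : P (P a) = P a := hCE.2.1 (P a) (hCE.1 a)
    simp [hc_def, map_sub, this]
  -- key: P (n * c) = 0 for every free normaliser n
  have key : ∀ n : A, QCP.IsFreeNormaliser B n → P (n * c) = 0 := by
    rintro n ⟨⟨k, hk1, hk2, hk3⟩, hfree⟩
    rcases hfree with hnB | hnsq
    · -- case n ∈ B
      obtain ⟨e, ⟨heB, _⟩, he⟩ := hLU {c}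
      have hce : c * e = c := (he c (by simp)).2
      have : n * c = n * c * e := by rw [mul_assoc, hce]
      rw [this, hCE.2.2 c n hnB e heB, hPc, mul_zero, zero_mul]
    · -- case n * n = 0
      obtain ⟨e, ⟨heB, _⟩, he⟩ := hLU {n, k, c, n * c, P (n * c)}
      have hen : e * n = n := (he n (by simp)).1
      have hne : n * e = n := (he n (by simp)).2
      have hek : e * k = k := (he k (by simp)).1
      have henc : e * (n * c) = n * c := (he (n * c) (by simp)).1
      have hnce : (n * c) * e = n * c := (he (n * c) (by simp)).2
      have heb : e * P (n * c) = P (n * c) := (he (P (n * c)) (by simp)).1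
      have hbe : P (n * c) * e = P (n * c) := (he (P (n * c)) (by simp)).2
      set f : A := n * e * k with hf_def
      have hfB : f ∈ B := (hk3 e heB).2
      have hfk : f = n * k := by rw [hf_def, hne]
      have hnf : n * f = 0 := by rw [hfk, ← mul_assoc, hnsq, zero_mul]
      have hfn : f * n = n := by rw [hfk, hk2]
      have hb0B : P (n * c) ∈ B := hCE.1 _
      -- b * f = 0
      have hbf : P (n * c) * f = 0 := by
        have h1 : e * (n * c) * f = 0 := by
          rw [henc, mul_assoc, hc f hfB, ← mul_assoc, hnf, zero_mul]
        have h2 := hCE.2.2 (n * c) e heB f hfB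
        rw [h1, heb] at h2
        simpa using h2.symm
      -- f * b = b
      have hfb : f * P (n * c) = P (n * c) := by
        have h1 : f * (n * c) * e = n * c := by
          rw [← mul_assoc, hfn, hnce]
        have h2 := hCE.2.2 (n * c) f hfB e heB
        rw [h1, mul_assoc, hbe] at h2
        exact h2.symm
      have := hcomm f hfB (P (n * c)) hb0B
      rw [hfb, hbf] at this
      exact this
  -- the linear map n ↦ P (n * c) vanishes on all of A
  set L : A →ₗ[R] A := P.comp (LinearMap.mulRight R c) with hL_def
  have hLn : ∀ n : A, L n = P (n * c) := fun n => rfl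
  have hker : Submodule.span R {n : A | QCP.IsFreeNormaliser B n} ≤ LinearMap.ker L := by
    rw [Submodule.span_le]
    intro n hn
    exact LinearMap.mem_ker.2 (key n hn)
  have hall : ∀ n : A, P (n * c) = 0 := by
    intro n
    have : n ∈ LinearMap.ker L := hker (hspan ▸ Submodule.mem_top)
    exact LinearMap.mem_ker.1 this
  -- conclude c = 0 by faithfulness
  have hc0 : c = 0 := by
    by_contra h
    obtain ⟨n, _, hne⟩ := hF c h
    exact hne (hall n)
  have : a = P a := by
    have := sub_eq_zero.mp hc0
    exact this
  rw [this]
  exact hCE.1 a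
end

section
/- If (A,B) is an algebraic Cartan pair, then every conditional expectation P : A → B is implemented by idempotents; in particular (A,B) is an algebraic quasi-Cartan pair. -/
/-- for an algebraic Cartan pair, every conditional expectation is
implemented by idempotents; in particular the pair is an algebraic quasi-Cartan pair. -/
theorem cartan_pair_is_quasi_cartan {R : Type*} [CommRing R] {A : Type*} [NonUnitalRing A]
    [Module R A] [SMulCommClass R A A] [IsScalarTower R A A]
    (B : NonUnitalSubalgebra R A)
    (hC : QCP.IsCartanPair B) :
    (∀ P : A →ₗ[R] A, QCP.IsCondExp B P → QCP.ImplementedByIdem B P) ∧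
      QCP.IsQuasiCartanPair B := by
  
  obtain ⟨⟨hcomm, hWT, hLU, hspanB, hspanN, P₀, hP₀, hfaith⟩, hmax⟩ := hC
  have main : ∀ P : A →ₗ[R] A, QCP.IsCondExp B P → QCP.ImplementedByIdem B P := by
    rintro P ⟨hPmem, hPfix, hPsand⟩
    -- one-sided module properties of P via local units
    have habsorb : ∀ a : A, ∃ e₀ : A, e₀ ∈ B ∧ e₀ * P a = P a ∧ P a * e₀ = P a ∧
        e₀ * a = a ∧ a * e₀ = a := by
      intro a
      obtain ⟨e₀, ⟨heB, hidem⟩, hu⟩ := hLU {a}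
      obtain ⟨h1, h2⟩ := hu a (Finset.mem_singleton_self a)
      have hPa : e₀ * P a * e₀ = P a := by
        rw [← hPsand a e₀ heB e₀ heB, h1, h2]
      have h3 : e₀ * P a = P a := by
        conv_lhs => rw [← hPa]
        rw [← mul_assoc, ← mul_assoc, hidem, hPa]
      have h4 : P a * e₀ = P a := by
        conv_lhs => rw [← hPa]
        rw [mul_assoc (e₀ * P a) e₀ e₀, hidem, hPa]
      exact ⟨e₀, heB, h3, h4, h1, h2⟩
    have hmod_r : ∀ (a : A), ∀ b ∈ B, P (a * b) = P a * b := by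
      intro a b hb
      obtain ⟨e₀, heB, h3, _, h5, _⟩ := habsorb a
      have hab : a * b = e₀ * a * b := by rw [h5]
      rw [hab, hPsand a e₀ heB b hb, h3]
    have hmod_l : ∀ (a : A), ∀ b ∈ B, P (b * a) = b * P a := by
      intro a b hb
      obtain ⟨e₀, heB, _, h4, _, h6⟩ := habsorb a
      have hab : b * a = b * a * e₀ := by rw [mul_assoc, h6]
      rw [hab, hPsand a b hb e₀ heB, mul_assoc, h4]
    rintro n ⟨k, hknk, hnkn, hdag⟩
    obtain ⟨en, ⟨henB, _⟩, hun⟩ := hLU {n}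
    obtain ⟨hen1, -⟩ := hun n (Finset.mem_singleton_self n)
    obtain ⟨ek, ⟨hekB, _⟩, huk⟩ := hLU {k}
    obtain ⟨hek1, -⟩ := huk k (Finset.mem_singleton_self k)
    have hu : n * k ∈ B := by
      have := (hdag ek hekB).2
      rwa [mul_assoc, hek1] at this
    have hv : k * n ∈ B := by
      have := (hdag en henB).1
      rwa [mul_assoc, hen1] at this
    have hPnB : P n ∈ B := hPmem n
    have h1 : n * k * P n = P n := by
      rw [← hmod_l n (n * k) hu, hnkn]
    have h2 : P n * (k * n) = P n := by
      rw [← hmod_r n (k * n) hv, ← mul_assoc, hnkn]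
    -- key commutation identities
    have hkey1 : ∀ b ∈ B, P n * b = n * b * k * P n := by
      intro b hb
      have hid : n * b * k * n = n * b := by
        rw [mul_assoc (n * b) k n, mul_assoc n b (k * n), hcomm b hb (k * n) hv,
          ← mul_assoc n (k * n) b, ← mul_assoc n k n, hnkn]
      calc P n * b = P (n * b) := (hmod_r n b hb).symm
        _ = P (n * b * k * n) := by rw [hid]
        _ = n * b * k * P n := hmod_l n (n * b * k) (hdag b hb).2
    have hkey2 : ∀ b ∈ B, b * P n = P n * (k * b * n) := by
      intro b hb
      have hid2 : n * (k * b * n) = b * n := by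
        rw [← mul_assoc n (k * b) n, ← mul_assoc n k b, hcomm (n * k) hu b hb,
          mul_assoc b (n * k) n, hnkn]
      calc b * P n = P (b * n) := (hmod_l n b hb).symm
        _ = P (n * (k * b * n)) := by rw [hid2]
        _ = P n * (k * b * n) := hmod_r n (k * b * n) (hdag b hb).1
    -- e₁ = k·P(n) and e₂ = P(n)·k commute with B, hence lie in B
    have hecomm : ∀ b ∈ B, (k * P n) * b = b * (k * P n) := by
      intro b hb
      have hsub : k * (n * b * k) = b * k := by
        rw [← mul_assoc k (n * b) k, ← mul_assoc k n b, hcomm (k * n) hv b hb,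
          mul_assoc b (k * n) k, hknk]
      calc (k * P n) * b = k * (P n * b) := mul_assoc k (P n) b
        _ = k * (n * b * k * P n) := by rw [hkey1 b hb]
        _ = (k * (n * b * k)) * P n := (mul_assoc k (n * b * k) (P n)).symm
        _ = (b * k) * P n := by rw [hsub]
        _ = b * (k * P n) := mul_assoc b k (P n)
    have he'comm : ∀ b ∈ B, b * (P n * k) = (P n * k) * b := by
      intro b hb
      have hsub2 : (k * b * n) * k = k * b := by
        rw [mul_assoc (k * b) n k, mul_assoc k b (n * k), hcomm b hb (n * k) hu,
          ← mul_assoc k (n * k) b, ← mul_assoc k n k, hknk]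
      calc b * (P n * k) = (b * P n) * k := (mul_assoc b (P n) k).symm
        _ = (P n * (k * b * n)) * k := by rw [hkey2 b hb]
        _ = P n * ((k * b * n) * k) := mul_assoc (P n) (k * b * n) k
        _ = P n * (k * b) := by rw [hsub2]
        _ = (P n * k) * b := (mul_assoc (P n) k b).symm
    have heB : k * P n ∈ B := hmax _ (fun b hb => hecomm b hb)
    have he'B : P n * k ∈ B := hmax _ (fun b hb => (he'comm b hb).symm)
    have hne : n * (k * P n) = P n := by rw [← mul_assoc n k (P n)]; exact h1
    have he'n : (P n * k) * n = P n := by rw [mul_assoc (P n) k n]; exact h2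
    have hPe : P n * (k * P n) = P n := by
      rw [← hmod_r n (k * P n) heB, hne, hPfix (P n) hPnB]
    have he'P : (P n * k) * P n = P n := by
      rw [← hmod_l n (P n * k) he'B, he'n, hPfix (P n) hPnB]
    refine ⟨(k * P n) * (P n * k), ⟨mul_mem heB he'B, ?_⟩, ?_, ?_⟩
    · have he1 : (k * P n) * (k * P n) = k * P n := by
        rw [mul_assoc k (P n) (k * P n), hPe]
      have he2 : (P n * k) * (P n * k) = P n * k := by
        rw [← mul_assoc (P n * k) (P n) k, he'P]
      calc ((k * P n) * (P n * k)) * ((k * P n) * (P n * k))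
          = (k * P n) * (((P n * k) * (k * P n)) * (P n * k)) := by
            rw [mul_assoc (k * P n) (P n * k) ((k * P n) * (P n * k)),
              ← mul_assoc (P n * k) (k * P n) (P n * k)]
        _ = (k * P n) * (((k * P n) * (P n * k)) * (P n * k)) := by
            rw [hcomm (P n * k) he'B (k * P n) heB]
        _ = ((k * P n) * (k * P n)) * ((P n * k) * (P n * k)) := by
            rw [mul_assoc (k * P n) (P n * k) (P n * k),
              ← mul_assoc (k * P n) (k * P n) ((P n * k) * (P n * k))]
        _ = (k * P n) * (P n * k) := by rw [he1, he2]
    · calc P n = (P n * k) * P n := he'P.symm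
        _ = P n * (P n * k) := hcomm (P n * k) he'B (P n) hPnB
        _ = (n * (k * P n)) * (P n * k) := by rw [hne]
        _ = n * ((k * P n) * (P n * k)) := mul_assoc n (k * P n) (P n * k)
    · calc P n = P n * (k * P n) := hPe.symm
        _ = (k * P n) * P n := (hcomm (P n) hPnB (k * P n) heB)
        _ = (k * P n) * ((P n * k) * n) := by rw [he'n]
        _ = ((k * P n) * (P n * k)) * n := (mul_assoc (k * P n) (P n * k) n).symm
  exact ⟨main, ⟨hcomm, hWT, hLU, hspanB, hspanN, P₀, hP₀, hfaith⟩,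
    P₀, hP₀, hfaith, main P₀ hP₀⟩
end

section
/- Let (A,B) be an algebraic quasi-Cartan pair and let P : A → B be a conditional expectation that is implemented by idempotents. Then for every n ∈ N(B), the set {e ∈ I(B) : e·(n†·n) = e and n·e ∈ B} has a maximum element e(n) with respect to the order on idempotents (e ≤ f iff e·f = e), and P(n) = n·e(n) = e(n)·n. -/
/-- for a quasi-Cartan pair with conditional expectation `P` implemented by
idempotents, the set `{e ∈ I(B) : e ≤ n†·n and n·e ∈ B}` has a maximum `e(n)`, and
`P(n) = n·e(n) = e(n)·n`. -/
theorem expectation_via_max_idem {R : Type*} [CommRing R] {A : Type*} [NonUnitalRing A]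
    [Module R A] [SMulCommClass R A A] [IsScalarTower R A A]
    (B : NonUnitalSubalgebra R A)
    (hQC : QCP.IsQuasiCartanPair B)
    (P : A →ₗ[R] A) (hP : QCP.IsCondExp B P) (hPi : QCP.ImplementedByIdem B P)
    (n k : A) (hk : QCP.IsDagger B n k) :
    ∃ en : A, QCP.IsIdem B en ∧ en * (k * n) = en ∧ n * en ∈ B ∧
      (∀ e : A, QCP.IsIdem B e → e * (k * n) = e → n * e ∈ B → e * en = e) ∧
      P n = n * en ∧ P n = en * n := by
  classical
  obtain ⟨hcomm, hWT, hLU, _⟩ := hQC.1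
  obtain ⟨f, hfI, hPnf, hPfn⟩ := hPi n ⟨k, hk⟩
  obtain ⟨hknk, hnkn, hkbn⟩ := hk
  obtain ⟨e₀, he₀I, he₀⟩ := hLU {n, k}
  have hen0 : e₀ * n = n := (he₀ n (by simp)).1
  have hke0 : k * e₀ = k := (he₀ k (by simp)).2
  have hfn : f * n = n * f := hPfn.symm.trans hPnf
  -- k*n ∈ B and is idempotent
  have hknB : k * n ∈ B := by
    have h := (hkbn e₀ he₀I.1).1
    rwa [hke0] at h
  have hknI : (k * n) * (k * n) = k * n := by
    have h1 : (k * n) * (k * n) = (k * n * k) * n := by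
      simp only [mul_assoc]
    rw [h1, hknk]
  have hfkn : f * (k * n) = (k * n) * f := hcomm f hfI.1 (k * n) hknB
  have hPnB : P n ∈ B := hP.1 n
  -- en := (k*n)*f
  have henB : k * n * f ∈ B := mul_mem hknB hfI.1
  have henI : (k * n * f) * (k * n * f) = k * n * f := by
    calc (k * n * f) * (k * n * f) = (k * n) * ((f * (k * n)) * f) := by
          simp only [mul_assoc]
      _ = (k * n) * (((k * n) * f) * f) := by rw [hfkn]
      _ = ((k * n) * (k * n)) * (f * f) := by simp only [mul_assoc]
      _ = k * n * f := by rw [hknI, hfI.2]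
  have h2 : (k * n * f) * (k * n) = k * n * f := by
    calc (k * n * f) * (k * n) = (k * n) * (f * (k * n)) := by
          simp only [mul_assoc]
      _ = (k * n) * ((k * n) * f) := by rw [hfkn]
      _ = ((k * n) * (k * n)) * f := by simp only [mul_assoc]
      _ = k * n * f := by rw [hknI]
  have h3 : n * (k * n * f) = P n := by
    calc n * (k * n * f) = (n * k * n) * f := by simp only [mul_assoc]
      _ = n * f := by rw [hnkn]
      _ = P n := hPnf.symm
  have h4 : (k * n * f) * n = P n := by
    have ha : (k * n * f) * n = (k * n) * (f * n) := by simp only [mul_assoc]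
    have hb : (k * n) * (f * n) = (f * n) * (k * n) := by
      rw [← hPfn]; exact hcomm (k * n) hknB (P n) hPnB
    have hcq : (f * n) * (k * n) = f * n := by
      calc (f * n) * (k * n) = f * (n * k * n) := by simp only [mul_assoc]
        _ = f * n := by rw [hnkn]
    rw [ha, hb, hcq, ← hPfn]
  refine ⟨k * n * f, ⟨henB, henI⟩, h2, ?_, ?_, h3.symm, h4.symm⟩
  · rw [h3]; exact hPnB
  · intro e heI he1 he2
    -- n * e = P n * e
    have hA : P (e₀ * n * e) = e₀ * P n * e := hP.2.2 n e₀ he₀I.1 e heI.1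
    rw [hen0, hP.2.1 (n * e) he2] at hA
    have hC : e₀ * P n = P n := by rw [hPnf, ← mul_assoc, hen0]
    rw [hC] at hA
    -- e = (k*n*f) * e
    have hE : e = (k * n) * e :=
      (((hcomm e heI.1 (k * n) hknB).symm.trans he1).symm : e = (k * n) * e)
    have hF : (k * n) * e = (k * n * f) * e := by
      calc (k * n) * e = k * (n * e) := by rw [mul_assoc]
        _ = k * ((f * n) * e) := by rw [hA, hPfn]
        _ = k * ((n * f) * e) := by rw [hfn]
        _ = (k * n * f) * e := by simp only [mul_assoc]
    have hG : e = (k * n * f) * e := hE.trans hF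
    calc e * (k * n * f) = (k * n * f) * e := hcomm e heI.1 (k * n * f) henB
      _ = e := hG.symm
end

section
/- Let (A,B) be an algebraic quasi-Cartan pair. Then there is a unique conditional expectation from A to B that is implemented by idempotents: if P₁ and P₂ are conditional expectations A → B both implemented by idempotents, then P₁ = P₂. -/
/-- a quasi-Cartan pair has a unique conditional expectation that is
implemented by idempotents. -/
theorem unique_expectation_implemented_by_idem {R : Type*} [CommRing R] {A : Type*}
    [NonUnitalRing A] [Module R A] [SMulCommClass R A A] [IsScalarTower R A A]
    (B : NonUnitalSubalgebra R A)
    (hQC : QCP.IsQuasiCartanPair B)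
    (P₁ P₂ : A →ₗ[R] A)
    (hP₁ : QCP.IsCondExp B P₁) (hP₁i : QCP.ImplementedByIdem B P₁)
    (hP₂ : QCP.IsCondExp B P₂) (hP₂i : QCP.ImplementedByIdem B P₂) :
    P₁ = P₂ := by
  obtain ⟨⟨hcomm, _, hLU, _, hspan, _⟩, _⟩ := hQC
  have key : ∀ n : A, QCP.MemNormaliser B n → P₁ n = P₂ n := by
    intro n hn
    obtain ⟨e₁, ⟨he₁B, he₁i⟩, h1r, h1l⟩ := hP₁i n hn
    obtain ⟨e₂, ⟨he₂B, he₂i⟩, h2r, h2l⟩ := hP₂i n hn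
    obtain ⟨f, ⟨hfB, hfi⟩, hf⟩ := hLU {n}
    have hfn : f * n = n := (hf n (Finset.mem_singleton_self n)).1
    have step : ∀ (P : A →ₗ[R] A), QCP.IsCondExp B P →
        ∀ e e' : A, e ∈ B → e' ∈ B → P n = n * e' → P (n * e) = (n * e') * e := by
      intro P hP e e' heB he'B hPn
      have := hP.2.2 n f hfB e heB
      rw [hfn] at this
      rw [this, hPn, ← mul_assoc, hfn]
    have hB1 : P₂ (P₁ n) = P₁ n := hP₂.2.1 (P₁ n) (hP₁.1 n)
    have hB2 : P₁ (P₂ n) = P₂ n := hP₁.2.1 (P₂ n) (hP₂.1 n)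
    have eq1 : n * e₁ = (n * e₂) * e₁ := by
      have := step P₂ hP₂ e₁ e₂ he₁B he₂B h2r
      rw [← h1r, hB1, h1r] at this
      exact this
    have eq2 : n * e₂ = (n * e₁) * e₂ := by
      have := step P₁ hP₁ e₂ e₁ he₂B he₁B h1r
      rw [← h2r, hB2, h2r] at this
      exact this
    rw [h1r, h2r, eq1, mul_assoc, hcomm e₂ he₂B e₁ he₁B, ← mul_assoc, ← eq2]
  ext a
  have ha : a ∈ Submodule.span R {n : A | QCP.MemNormaliser B n} :=
    hspan ▸ Submodule.mem_top
  induction ha using Submodule.span_induction with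
  | mem x hx => exact key x hx
  | zero => simp
  | add x y _ _ hx hy => simp [hx, hy]
  | smul r x _ hx => simp [hx]
end

section
/- Let (A,B) be an algebraic Cartan pair. Then there is a unique conditional expectation from A to B: any two conditional expectations P₁, P₂ : A → B are equal. -/
section CartanUniqueAux

open QCP

variable {R : Type*} [CommRing R] {A : Type*} [NonUnitalRing A]
  [Module R A] [SMulCommClass R A A] [IsScalarTower R A A]

private lemma condExp_mul_left {B : NonUnitalSubalgebra R A} (hLU : HasLocalUnits B)
    {P : A →ₗ[R] A} (hP : IsCondExp B P) {b : A} (hb : b ∈ B) (a : A) :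
    P (b * a) = b * P a := by
  classical
  obtain ⟨f, ⟨hfB, hff⟩, hf⟩ := hLU {a}
  have h1 : f * a = a := (hf a (by simp)).1
  have h2 : a * f = a := (hf a (by simp)).2
  have key : f * P a * f = P a := by
    have h := hP.2.2 a f hfB f hfB
    rw [h1, h2] at h
    exact h.symm
  have hPaf : P a * f = P a := by
    calc P a * f = f * P a * f * f := by rw [key]
      _ = f * P a * (f * f) := by rw [mul_assoc]
      _ = f * P a * f := by rw [hff]
      _ = P a := key
  calc P (b * a) = P (b * a * f) := by rw [mul_assoc, h2]
    _ = b * P a * f := hP.2.2 a b hb f hfB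
    _ = b * (P a * f) := by rw [mul_assoc]
    _ = b * P a := by rw [hPaf]

private lemma condExp_mul_right {B : NonUnitalSubalgebra R A} (hLU : HasLocalUnits B)
    {P : A →ₗ[R] A} (hP : IsCondExp B P) {b : A} (hb : b ∈ B) (a : A) :
    P (a * b) = P a * b := by
  classical
  obtain ⟨f, ⟨hfB, hff⟩, hf⟩ := hLU {a}
  have h1 : f * a = a := (hf a (by simp)).1
  have h2 : a * f = a := (hf a (by simp)).2
  have key : f * P a * f = P a := by
    have h := hP.2.2 a f hfB f hfB
    rw [h1, h2] at h
    exact h.symm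
  have hfPa : f * P a = P a := by
    calc f * P a = f * (f * P a * f) := by rw [key]
      _ = f * (f * P a) * f := by rw [← mul_assoc]
      _ = f * f * P a * f := by rw [← mul_assoc]
      _ = f * P a * f := by rw [hff]
      _ = P a := key
  calc P (a * b) = P (f * a * b) := by rw [h1]
    _ = f * P a * b := hP.2.2 a f hfB b hb
    _ = P a * b := by rw [hfPa]

private lemma key_eq {B : NonUnitalSubalgebra R A}
    (hComm : ∀ x ∈ B, ∀ y ∈ B, x * y = y * x)
    (hLU : HasLocalUnits B)
    (hMax : ∀ a : A, (∀ b ∈ B, a * b = b * a) → a ∈ B)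
    {P₁ P₂ : A →ₗ[R] A} (hP₁ : IsCondExp B P₁) (hP₂ : IsCondExp B P₂)
    {n : A} (hn : MemNormaliser B n) : P₁ n = P₂ n := by
  classical
  obtain ⟨k, hknk, hnkn, hdag⟩ := hn
  obtain ⟨e, ⟨heB, hee⟩, hu⟩ := hLU {n, k, P₁ n, P₂ n}
  have hne : n * e = n := (hu n (by simp)).2
  have hke : k * e = k := (hu k (by simp)).2
  have hek : e * k = k := (hu k (by simp)).1
  have hpe : P₁ n * e = P₁ n := (hu _ (by simp)).2
  have hce : P₂ n * e = P₂ n := (hu _ (by simp)).2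
  have hec : e * P₂ n = P₂ n := (hu _ (by simp)).1
  -- memberships of n*k, k*n in B
  have hnkB : n * k ∈ B := by
    have h := (hdag e heB).2
    rwa [hne] at h
  have hknB : k * n ∈ B := by
    have h := (hdag e heB).1
    rwa [hke] at h
  -- key identities for an arbitrary conditional expectation
  have hPnb : ∀ (P : A →ₗ[R] A), IsCondExp B P → ∀ b ∈ B,
      P n * b = n * b * k * P n := by
    intro P hP b hb
    have h1 : n * b * k * n = n * b := by
      calc n * b * k * n = n * (b * (k * n)) := by rw [mul_assoc, mul_assoc]
        _ = n * (k * n * b) := by rw [hComm b hb (k * n) hknB]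
        _ = n * (k * n) * b := by rw [← mul_assoc]
        _ = n * k * n * b := by rw [← mul_assoc]
        _ = n * b := by rw [hnkn]
    calc P n * b = P (n * b) := (condExp_mul_right hLU hP hb n).symm
      _ = P (n * b * k * n) := by rw [h1]
      _ = n * b * k * P n := condExp_mul_left hLU hP ((hdag b hb).2) n
  have hbPn : ∀ (P : A →ₗ[R] A), IsCondExp B P → ∀ b ∈ B,
      b * P n = P n * (k * b * n) := by
    intro P hP b hb
    have h1 : n * (k * b * n) = b * n := by
      calc n * (k * b * n) = n * (k * b) * n := by rw [← mul_assoc]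
        _ = n * k * b * n := by rw [← mul_assoc]
        _ = b * (n * k) * n := by rw [hComm (n * k) hnkB b hb]
        _ = b * (n * k * n) := by rw [mul_assoc]
        _ = b * n := by rw [hnkn]
    calc b * P n = P (b * n) := (condExp_mul_left hLU hP hb n).symm
      _ = P (n * (k * b * n)) := by rw [h1]
      _ = P n * (k * b * n) := condExp_mul_right hLU hP ((hdag b hb).1) n
  -- maximal commutativity gives k*x ∈ B and x*k ∈ B
  have hkmem : ∀ x : A, (∀ b ∈ B, x * b = n * b * k * x) → k * x ∈ B := by
    intro x hx
    apply hMax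
    intro b hb
    have haux : k * (n * b * k) = b * k := by
      calc k * (n * b * k) = k * (n * b) * k := by rw [← mul_assoc]
        _ = k * n * b * k := by rw [← mul_assoc]
        _ = b * (k * n) * k := by rw [hComm (k * n) hknB b hb]
        _ = b * (k * n * k) := by rw [mul_assoc]
        _ = b * k := by rw [hknk]
    calc k * x * b = k * (x * b) := by rw [mul_assoc]
      _ = k * (n * b * k * x) := by rw [hx b hb]
      _ = k * (n * b * k) * x := by rw [← mul_assoc]
      _ = b * k * x := by rw [haux]
      _ = b * (k * x) := by rw [mul_assoc]
  have hkmem' : ∀ x : A, (∀ b ∈ B, b * x = x * (k * b * n)) → x * k ∈ B := by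
    intro x hx
    apply hMax
    intro b hb
    have haux : k * b * n * k = k * b := by
      calc k * b * n * k = k * b * (n * k) := by rw [mul_assoc]
        _ = k * (b * (n * k)) := by rw [mul_assoc]
        _ = k * (n * k * b) := by rw [hComm b hb (n * k) hnkB]
        _ = k * (n * k) * b := by rw [← mul_assoc]
        _ = k * n * k * b := by rw [← mul_assoc]
        _ = k * b := by rw [hknk]
    have h : b * (x * k) = x * k * b := by
      calc b * (x * k) = b * x * k := by rw [← mul_assoc]
        _ = x * (k * b * n) * k := by rw [hx b hb]
        _ = x * (k * b * n * k) := by rw [mul_assoc]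
        _ = x * (k * b) := by rw [haux]
        _ = x * k * b := by rw [← mul_assoc]
    exact h.symm
  -- abbreviations
  have hpB : P₁ n ∈ B := hP₁.1 n
  have hcB : P₂ n ∈ B := hP₂.1 n
  have hmB : P₁ n - P₂ n ∈ B := B.sub_mem hpB hcB
  have hmb : ∀ b ∈ B, (P₁ n - P₂ n) * b = n * b * k * (P₁ n - P₂ n) := by
    intro b hb
    rw [sub_mul, mul_sub, hPnb P₁ hP₁ b hb, hPnb P₂ hP₂ b hb]
  have hkcB : k * P₂ n ∈ B := hkmem _ (hPnb P₂ hP₂)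
  have hkmB : k * (P₁ n - P₂ n) ∈ B := hkmem _ hmb
  have hckB : P₂ n * k ∈ B := hkmem' _ (hbPn P₂ hP₂)
  -- c = n * (k * c)
  have hc1 : P₂ n = n * (k * P₂ n) := by
    have h := hPnb P₂ hP₂ e heB
    rw [hne, hce] at h
    exact h.trans (mul_assoc n k (P₂ n))
  -- c = (c * k) * n
  have hc2 : P₂ n = P₂ n * k * n := by
    have h := hbPn P₂ hP₂ e heB
    rw [hke, hec] at h
    exact h.trans (mul_assoc (P₂ n) k n).symm
  -- m = n * (k * m)
  have hm1 : P₁ n - P₂ n = n * (k * (P₁ n - P₂ n)) := by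
    have h := hmb e heB
    rw [hne] at h
    have h2 : (P₁ n - P₂ n) * e = P₁ n - P₂ n := by rw [sub_mul, hpe, hce]
    rw [h2] at h
    exact h.trans (mul_assoc n k (P₁ n - P₂ n))
  -- c * (k * c) = c
  have hckc : P₂ n * (k * P₂ n) = P₂ n := by
    have h := condExp_mul_right hLU hP₂ hkcB n
    rw [← hc1, hP₂.2.1 _ hcB] at h
    exact h.symm
  -- m = c * (k * m)
  have hmckm : P₁ n - P₂ n = P₂ n * (k * (P₁ n - P₂ n)) := by
    have h := condExp_mul_right hLU hP₂ hkmB n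
    rw [← hm1, hP₂.2.1 _ hmB] at h
    exact h
  -- c = (c * k) * P₁ n
  have hckp : P₂ n = P₂ n * k * P₁ n := by
    have h := condExp_mul_left hLU hP₁ hckB n
    rw [← hc2, hP₁.2.1 _ hcB] at h
    exact h
  -- conclude (c * k) * m = 0
  have hzero : P₂ n * k * (P₁ n - P₂ n) = 0 := by
    have h3 : P₂ n * k * P₁ n = P₂ n + P₂ n * k * (P₁ n - P₂ n) := by
      have h4 : P₂ n * k * P₂ n = P₂ n := by
        rw [mul_assoc]; exact hckc
      calc P₂ n * k * P₁ n
          = P₂ n * k * (P₂ n + (P₁ n - P₂ n)) := by rw [add_sub_cancel]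
        _ = P₂ n * k * P₂ n + P₂ n * k * (P₁ n - P₂ n) := by rw [mul_add]
        _ = P₂ n + P₂ n * k * (P₁ n - P₂ n) := by rw [h4]
    have h5 : P₂ n = P₂ n + P₂ n * k * (P₁ n - P₂ n) := hckp.trans h3
    exact (left_eq_add.mp h5)
  have hfin : P₁ n - P₂ n = 0 := by
    rw [hmckm, ← mul_assoc]
    exact hzero
  exact sub_eq_zero.mp hfin

end CartanUniqueAux

/-- an algebraic Cartan pair has a unique conditional expectation. -/
theorem cartan_unique_expectation {R : Type*} [CommRing R] {A : Type*}
    [NonUnitalRing A] [Module R A] [SMulCommClass R A A] [IsScalarTower R A A]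
    (B : NonUnitalSubalgebra R A)
    (hC : QCP.IsCartanPair B)
    (P₁ P₂ : A →ₗ[R] A)
    (hP₁ : QCP.IsCondExp B P₁) (hP₂ : QCP.IsCondExp B P₂) :
    P₁ = P₂ := by
  obtain ⟨⟨hComm, hWT, hLU, hBspan, hNspan, hfaith⟩, hMax⟩ := hC
  apply LinearMap.ext_on hNspan
  intro n hn
  exact key_eq hComm hLU hMax hP₁ hP₂ hn
end

section
/- Let (A,B) be an algebraic quasi-Cartan pair. If n ∈ N(B) ∩ B, then n† ∈ B. -/
/-- in a quasi-Cartan pair, if `n ∈ N(B) ∩ B` then `n† ∈ B`. -/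
theorem dagger_mem_of_mem {R : Type*} [CommRing R] {A : Type*}
    [NonUnitalRing A] [Module R A] [SMulCommClass R A A] [IsScalarTower R A A]
    (B : NonUnitalSubalgebra R A)
    (hQC : QCP.IsQuasiCartanPair B)
    (n k : A) (hnB : n ∈ B) (hk : QCP.IsDagger B n k) :
    k ∈ B := by
  classical
  obtain ⟨hAP, P, hP, -, -⟩ := hQC
  obtain ⟨-, -, hLU, -⟩ := hAP
  obtain ⟨e, ⟨heB, -⟩, he⟩ := hLU {n, k, P k}
  have hne : n * e = n := (he n (by simp)).2
  have hek : e * k = k := (he k (by simp)).1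
  have hke : k * e = k := (he k (by simp)).2
  have hePk : e * P k = P k := (he (P k) (by simp)).1
  have hnk : n * k ∈ B := by
    have h := (hk.2.2 e heB).2
    rwa [hne] at h
  have hkn_eq : k * n = P k * n := by
    have h1 : k * n ∈ B := by
      have h := (hk.2.2 e heB).1
      rwa [hke] at h
    have h2 : P (k * n) = k * n := hP.2.1 _ h1
    have h3 : P (e * k * n) = e * P k * n := hP.2.2 k e heB n hnB
    rw [hek, hePk, h2] at h3
    exact h3
  have hkey : k = P k * (n * k) := by
    rw [← mul_assoc, ← hkn_eq, hk.1]
  rw [hkey]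
  exact mul_mem (hP.1 k) hnk
end

section
/- Let (A,B) be an algebraic quasi-Cartan pair. Suppose n ∈ N(B) ∩ B can be written as n = Σᵢ₌₁ᵏ tᵢ•eᵢ where e₁, …, e_k ∈ I(B) are nonzero pairwise orthogonal idempotents (eᵢ·eⱼ = 0 for i ≠ j) and t₁, …, t_k ∈ R are all nonzero. Then each tᵢ is a unit of R. -/
/-- Key induction: if `g` is a nonzero idempotent of `B` and
`u • g + t • (Σ cⱼ • fⱼ) * g = 0` with `fⱼ` idempotents of `B`, then `u + t * s = 0` for
some subset-sum `s` of the `cⱼ`'s. -/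
theorem key_span_lemma {R : Type*} [CommRing R] {A : Type*}
    [NonUnitalRing A] [Module R A] [SMulCommClass R A A] [IsScalarTower R A A]
    (B : NonUnitalSubalgebra R A)
    (hcomm : ∀ x ∈ B, ∀ y ∈ B, x * y = y * x)
    (hWT : QCP.CondWT B) :
    ∀ L : List (R × A), (∀ p ∈ L, p.2 ∈ B ∧ p.2 * p.2 = p.2) →
      ∀ g : A, g ∈ B → g * g = g → g ≠ 0 → ∀ u t : R,
        u • g + t • ((L.map fun p => p.1 • p.2).sum * g) = 0 →
        ∃ s : R, u + t * s = 0 := by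
  intro L
  induction L with
  | nil =>
    intro _ g hgB hgi hg0 u t heq
    simp only [List.map_nil, List.sum_nil, zero_mul, smul_zero, add_zero] at heq
    rcases hWT g hgB hgi u heq with h | h
    · exact ⟨0, by rw [mul_zero, add_zero, h]⟩
    · exact absurd h hg0
  | cons p L ih =>
    intro hL g hgB hgi hg0 u t heq
    obtain ⟨hfB, hfi⟩ := hL p List.mem_cons_self
    have hLrest : ∀ q ∈ L, q.2 ∈ B ∧ q.2 * q.2 = q.2 := fun q hq => hL q (List.mem_cons_of_mem p hq)
    set f := p.2 with hf
    set m := (L.map fun q => q.1 • q.2).sum with hm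
    have hexp : u • g + t • ((p.1 • f + m) * g) = 0 := by
      simpa [hm] using heq
    by_cases h1 : f * g = 0
    · -- the head idempotent dies on g
      have heq' : u • g + t • (m * g) = 0 := by
        have : (p.1 • f + m) * g = m * g := by
          rw [add_mul, smul_mul_assoc, h1, smul_zero, zero_add]
        rwa [this] at hexp
      exact ih hLrest g hgB hgi hg0 u t heq'
    · -- work below the idempotent f * g
      have hfg : g * f = f * g := hcomm g hgB f hfB
      have hg1B : f * g ∈ B := mul_mem hfB hgB
      have hg1i : (f * g) * (f * g) = f * g := by
        rw [mul_assoc f g (f * g), ← mul_assoc g f g, hfg, mul_assoc f g g, hgi,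
          ← mul_assoc, hfi]
      have hgg1 : g * (f * g) = f * g := by
        rw [← mul_assoc, hfg, mul_assoc, hgi]
      have hfg1 : f * (f * g) = f * g := by
        rw [← mul_assoc, hfi]
      -- multiply the equation on the right by f * g
      have heq2 : (u + t * p.1) • (f * g) + t • (m * (f * g)) = 0 := by
        have h0 := congrArg (fun z => z * (f * g)) hexp
        simp only [zero_mul] at h0
        calc (u + t * p.1) • (f * g) + t • (m * (f * g))
            = (u • g + t • ((p.1 • f + m) * g)) * (f * g) := by
              rw [add_mul, smul_mul_assoc, hgg1, smul_mul_assoc, mul_assoc, hgg1,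
                add_mul, smul_mul_assoc, hfg1, add_smul, mul_smul, smul_add, add_assoc]
          _ = 0 := h0
      obtain ⟨s', hs'⟩ := ih hLrest (f * g) hg1B hg1i h1 (u + t * p.1) t heq2
      exact ⟨p.1 + s', by rw [mul_add, ← add_assoc]; exact hs'⟩

/-- in a quasi-Cartan pair, if `n ∈ N(B) ∩ B` is written as a combination of
nonzero pairwise orthogonal idempotents with nonzero coefficients, then each coefficient
is a unit of `R`. -/
theorem coefficients_are_units {R : Type*} [CommRing R] {A : Type*}
    [NonUnitalRing A] [Module R A] [SMulCommClass R A A] [IsScalarTower R A A]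
    (B : NonUnitalSubalgebra R A)
    (hQC : QCP.IsQuasiCartanPair B)
    (n : A) (hnN : QCP.MemNormaliser B n) (hnB : n ∈ B)
    (k : ℕ) (t : Fin k → R) (e : Fin k → A)
    (he : ∀ i, QCP.IsIdem B (e i)) (he0 : ∀ i, e i ≠ 0)
    (horth : ∀ i j, i ≠ j → e i * e j = 0)
    (ht : ∀ i, t i ≠ 0)
    (hsum : n = ∑ i, t i • e i) :
    ∀ i, IsUnit (t i) := by
  obtain ⟨⟨hcomm, hWT, hLU, hspan, -, -⟩, P, hP, -, -⟩ := hQC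
  obtain ⟨hPmem, hPfix, hPbim⟩ := hP
  intro i
  obtain ⟨kk, hk1, hk2, hk3⟩ := hnN
  have hei : e i ∈ B := (he i).1
  have heii : e i * e i = e i := (he i).2
  -- e i * n = t i • e i and n * e i = t i • e i
  have hen : e i * n = t i • e i := by
    rw [hsum, Finset.mul_sum]
    rw [Finset.sum_eq_single i]
    · rw [mul_smul_comm, heii]
    · intro j _ hji
      rw [mul_smul_comm, horth i j (Ne.symm hji), smul_zero]
    · intro h; exact absurd (Finset.mem_univ i) h
  have hne : n * e i = t i • e i := by
    rw [hsum, Finset.sum_mul]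
    rw [Finset.sum_eq_single i]
    · rw [smul_mul_assoc, heii]
    · intro j _ hji
      rw [smul_mul_assoc, horth j i hji, smul_zero]
    · intro h; exact absurd (Finset.mem_univ i) h
  set x := e i * kk * e i with hx
  have heix : e i * x = x := by
    rw [hx, ← mul_assoc, ← mul_assoc, heii]
  have hxei : x * e i = x := by
    rw [hx, mul_assoc, heii]
  -- y := t i • x lies in B
  have hyB : t i • x ∈ B := by
    have h1 : n * e i * kk ∈ B := (hk3 (e i) hei).2
    have h2 : (n * e i * kk) * e i ∈ B := mul_mem h1 hei
    have h3 : (n * e i * kk) * e i = t i • x := by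
      rw [hne, smul_mul_assoc, smul_mul_assoc, hx]
    rwa [h3] at h2
  -- t i • (t i • x) = t i • e i, from n * kk * n = n sandwiched by e i
  have key1 : t i • (t i • x) = t i • e i := by
    have h0 := congrArg (fun z => e i * z * e i) hk2
    have hl : e i * (n * kk * n) * e i = t i • (t i • x) := by
      calc e i * (n * kk * n) * e i = (e i * n) * kk * (n * e i) := by
            rw [← mul_assoc, ← mul_assoc, mul_assoc (e i * n * kk)]
        _ = (t i • e i) * kk * (t i • e i) := by rw [hen, hne]
        _ = t i • (t i • (e i * kk * e i)) := by
            rw [smul_mul_assoc, smul_mul_assoc, mul_smul_comm]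
        _ = t i • (t i • x) := rfl
    have hr : e i * n * e i = t i • e i := by
      rw [hen, smul_mul_assoc, heii]
    rw [hl, hr] at h0
    exact h0
  -- y = t i • x is idempotent
  have hyi : (t i • x) * (t i • x) = t i • x := by
    calc (t i • x) * (t i • x) = (t i • (t i • x)) * x := by
          rw [smul_mul_assoc, mul_smul_comm, smul_mul_assoc, smul_mul_assoc]
      _ = (t i • e i) * x := by rw [key1]
      _ = t i • x := by rw [smul_mul_assoc, heix]
  have hyei : (t i • x) * e i = t i • x := by rw [smul_mul_assoc, hxei]
  have heiy : e i * (t i • x) = t i • x := by rw [mul_smul_comm, heix]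
  -- e i - t i • x is an idempotent of B killed by t i, so e i = t i • x by (WT)
  have hdB : e i - t i • x ∈ B := sub_mem hei hyB
  have hdi : (e i - t i • x) * (e i - t i • x) = e i - t i • x := by
    rw [sub_mul, mul_sub, mul_sub, heii, heiy, hyei, hyi]
    abel
  have hdz : t i • (e i - t i • x) = 0 := by
    rw [smul_sub, key1, sub_self]
  have hey : e i = t i • x := by
    rcases hWT _ hdB hdi _ hdz with h | h
    · exact absurd h (ht i)
    · exact (sub_eq_zero.mp h)
  -- apply the conditional expectation: b := P x ∈ B with t i • b = e i
  have hbB : P x ∈ B := hPmem x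
  have htb : t i • P x = e i := by
    rw [← map_smul, ← hey, hPfix (e i) hei]
  -- b lies in the span of the idempotents of B
  have hbspan : P x ∈ Submodule.span R {e : A | QCP.IsIdem B e} := by
    have : P x ∈ (B : Set A) := hbB
    rw [hspan] at this
    exact this
  rw [Submodule.mem_span_set'] at hbspan
  obtain ⟨m, c, w, hsum'⟩ := hbspan
  -- set up the list for the key lemma
  set L : List (R × A) := (List.finRange m).map fun j => (c j, (w j : A)) with hL
  have hLmem : ∀ p ∈ L, p.2 ∈ B ∧ p.2 * p.2 = p.2 := by
    intro p hp
    rw [hL, List.mem_map] at hp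
    obtain ⟨j, _, rfl⟩ := hp
    exact (w j).2
  have hLsum : (L.map fun p => p.1 • p.2).sum = P x := by
    rw [hL, List.map_map, ← hsum', Fin.sum_univ_def]
    rfl
  have heqn : (-1 : R) • e i + t i • ((L.map fun p => p.1 • p.2).sum * e i) = 0 := by
    rw [hLsum, ← smul_mul_assoc, htb, heii, neg_smul, one_smul, neg_add_cancel]
  obtain ⟨s, hs⟩ := key_span_lemma B hcomm hWT L hLmem (e i) hei heii (he0 i) (-1) (t i) heqn
  exact IsUnit.of_mul_eq_one (a := t i) s (by linear_combination hs)
end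

section
/- Let G be a group satisfying the unique product property, let R be a unital integral domain, and let c be a normalised Rˣ-valued 2-cocycle on G. Then the only units of the twisted group ring R(G,c) are the trivial ones: if a, b are finitely supported functions G → R with a*b = b*a = δ₁ (where * is the c-twisted convolution), then a = t•δ_g for some t ∈ Rˣ and g ∈ G. -/
/-- The twisted convolution product on the twisted group ring `R(G,c)` of finitely
supported functions `G →₀ R`: `(f*g)(β) = ∑_α c(α, α⁻¹β)·f(α)·g(α⁻¹β)`, i.e.
`f*g = ∑_{α,β} c(α,β)·f(α)·g(β)·δ_{αβ}`. -/
noncomputable def twistedMul {G : Type*} [Group G] {R : Type*} [CommRing R]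
    (c : G → G → Rˣ) (f g : G →₀ R) : G →₀ R :=
  f.sum fun α r => g.sum fun β s => Finsupp.single (α * β) ((c α β : R) * r * s)

/-- `c` is a 2-cocycle on `G` with values in `Rˣ`. -/
def IsTwoCocycle {G : Type*} [Group G] {R : Type*} [CommRing R] (c : G → G → Rˣ) : Prop :=
  ∀ α β γ : G, c α β * c (α * β) γ = c α (β * γ) * c β γ

/-- `c` is normalised. -/
def IsNormalised {G : Type*} [Group G] {R : Type*} [CommRing R] (c : G → G → Rˣ) : Prop :=
  ∀ γ : G, c 1 γ = 1 ∧ c γ 1 = 1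

lemma twistedMul_apply {G : Type*} [Group G] [DecidableEq G] {R : Type*} [CommRing R]
    (c : G → G → Rˣ) (f g : G →₀ R) (x : G) :
    twistedMul c f g x = ∑ α ∈ f.support, ∑ β ∈ g.support,
      if α * β = x then (c α β : R) * f α * g β else 0 := by
  rw [twistedMul, Finsupp.sum, Finsupp.finset_sum_apply]
  refine Finset.sum_congr rfl fun α _ => ?_
  rw [Finsupp.sum, Finsupp.finset_sum_apply]
  exact Finset.sum_congr rfl fun β _ => by rw [Finsupp.single_apply]

lemma twistedMul_apply_of_uniqueMul {G : Type*} [Group G] [DecidableEq G] {R : Type*} [CommRing R]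
    (c : G → G → Rˣ) (f g : G →₀ R) {s t : G}
    (hs : s ∈ f.support) (ht : t ∈ g.support)
    (hu : UniqueMul f.support g.support s t) :
    twistedMul c f g (s * t) = (c s t : R) * f s * g t := by
  rw [twistedMul_apply]
  rw [Finset.sum_eq_single s, Finset.sum_eq_single t, if_pos rfl]
  · intro β hβ hne
    rw [if_neg]
    intro h
    exact hne (hu hs hβ h).2
  · intro h; exact absurd ht h
  · intro α hα hne
    apply Finset.sum_eq_zero
    intro β hβ
    rw [if_neg]
    intro h
    exact hne (hu hα hβ h).1
  · intro h; exact absurd hs h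

/-- if `G` has the unique product property and `R` is an integral domain,
then every unit of the twisted group ring `R(G,c)` is trivial, i.e. of the form `t•δ_g`. -/
theorem twisted_group_ring_units_trivial {G : Type*} [Group G] [UniqueProds G]
    {R : Type*} [CommRing R] [IsDomain R]
    (c : G → G → Rˣ) (hcoc : IsTwoCocycle c) (hnorm : IsNormalised c)
    (a b : G →₀ R)
    (hab : twistedMul c a b = Finsupp.single 1 1)
    (hba : twistedMul c b a = Finsupp.single 1 1) :
    ∃ (t : Rˣ) (g : G), a = Finsupp.single g (t : R) := by
  classical
  haveI : TwoUniqueProds G := UniqueProds.toTwoUniqueProds_of_group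
  have ha0 : a ≠ 0 := by
    rintro rfl
    apply one_ne_zero (α := R)
    have := congrArg (fun f : G →₀ R => f 1) hab
    simpa [twistedMul] using this.symm
  have hb0 : b ≠ 0 := by
    rintro rfl
    apply one_ne_zero (α := R)
    have := congrArg (fun f : G →₀ R => f 1) hab
    simpa [twistedMul, Finsupp.sum] using this.symm
  have hane : a.support.Nonempty := Finsupp.support_nonempty_iff.2 ha0
  have hbne : b.support.Nonempty := Finsupp.support_nonempty_iff.2 hb0
  -- key: for any unique-mul pair, s*t = 1
  have key : ∀ s t : G, s ∈ a.support → t ∈ b.support →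
      UniqueMul a.support b.support s t → s * t = 1 := by
    intro s t hs ht hu
    have h1 : twistedMul c a b (s * t) ≠ 0 := by
      rw [twistedMul_apply_of_uniqueMul c a b hs ht hu]
      exact mul_ne_zero (mul_ne_zero (c s t).ne_zero (Finsupp.mem_support_iff.1 hs))
        (Finsupp.mem_support_iff.1 ht)
    rw [hab] at h1
    by_contra h
    exact h1 (Finsupp.single_apply_eq_zero.2 fun h' => absurd h' h)
  have hcard : a.support.card * b.support.card = 1 := by
    by_contra h
    have hpos : 0 < a.support.card * b.support.card :=
      Nat.mul_pos (Finset.card_pos.2 hane) (Finset.card_pos.2 hbne)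
    have hlt : 1 < a.support.card * b.support.card := lt_of_le_of_ne hpos (Ne.symm h)
    obtain ⟨p1, hp1, p2, hp2, hne, hu1, hu2⟩ :=
      TwoUniqueProds.uniqueMul_of_one_lt_card hlt
    rw [Finset.mem_product] at hp1 hp2
    have e1 := key _ _ hp1.1 hp1.2 hu1
    have e2 := key _ _ hp2.1 hp2.2 hu2
    have := hu1 hp2.1 hp2.2 (e2.trans e1.symm)
    exact hne (Prod.ext this.1 this.2).symm
  have h1 : a.support.card = 1 := Nat.eq_one_of_mul_eq_one_right hcard
  have h2 : b.support.card = 1 := Nat.eq_one_of_mul_eq_one_left hcard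
  obtain ⟨g, hg⟩ := Finset.card_eq_one.1 h1
  obtain ⟨h, hh⟩ := Finset.card_eq_one.1 h2
  have hag : a = Finsupp.single g (a g) := by
    ext x
    rcases eq_or_ne x g with rfl | hx
    · simp
    · rw [Finsupp.single_apply, if_neg (Ne.symm hx)]
      by_contra hxa
      have : x ∈ a.support := Finsupp.mem_support_iff.2 hxa
      rw [hg, Finset.mem_singleton] at this
      exact hx this
  have hbh : b = Finsupp.single h (b h) := by
    ext x
    rcases eq_or_ne x h with rfl | hx
    · simp
    · rw [Finsupp.single_apply, if_neg (Ne.symm hx)]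
      by_contra hxb
      have : x ∈ b.support := Finsupp.mem_support_iff.2 hxb
      rw [hh, Finset.mem_singleton] at this
      exact hx this
  have hmul : twistedMul c a b = Finsupp.single (g * h) ((c g h : R) * a g * b h) := by
    rw [hag, hbh, twistedMul]
    rw [Finsupp.sum_single_index (by simp [Finsupp.sum_single_index])]
    rw [Finsupp.sum_single_index (by simp)]
    simp
  rw [hab] at hmul
  rw [Finsupp.single_eq_single_iff] at hmul
  rcases hmul with ⟨hgh, hval⟩ | ⟨hz, _⟩
  · have hu : IsUnit (a g) := by
      refine IsUnit.of_mul_eq_one (a := a g) ((c g h : R) * b h) ?_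
      rw [← mul_assoc, mul_comm (a g) ((c g h : R)), ← hval]
    exact ⟨hu.unit, g, by rw [hu.unit_spec]; exact hag⟩
  · exact absurd hz one_ne_zero
end

section
/- Let G be a group, let R be an indecomposable commutative ring with identity, and let c be a normalised Rˣ-valued 2-cocycle on G. Let A = R(G,c) be the twisted group ring, let B = {t•δ₁ : t ∈ R} be the subalgebra of scalar multiples of the identity, and let P : A → B be the R-linear map P(f) = f(1)•δ₁. Then P is implemented by idempotents — meaning: for every n ∈ N(B) there exists an idempotent e ∈ B with P(n) = n*e = e*n — if and only if every unit of A is trivial, i.e. every a ∈ A admitting b with a*b = b*a = δ₁ equals t•δ_g for some t ∈ Rˣ and g ∈ G. -/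
section Helpers

variable {G : Type*} [Group G] {R : Type*} [CommRing R] (c : G → G → Rˣ)

lemma twistedMul_zero_left (f : G →₀ R) : twistedMul c 0 f = 0 := by
  simp [twistedMul]

lemma twistedMul_zero_right (f : G →₀ R) : twistedMul c f 0 = 0 := by
  simp [twistedMul]

lemma twistedMul_single_left (g : G) (s : R) (f : G →₀ R) :
    twistedMul c (Finsupp.single g s) f
      = f.sum fun β r => Finsupp.single (g * β) ((c g β : R) * s * r) := by
  classical
  rw [twistedMul, Finsupp.sum_single_index]
  simp

lemma twistedMul_single_right (f : G →₀ R) (h : G) (t : R) :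
    twistedMul c f (Finsupp.single h t)
      = f.sum fun α r => Finsupp.single (α * h) ((c α h : R) * r * t) := by
  classical
  rw [twistedMul]
  refine Finsupp.sum_congr fun α _ => ?_
  rw [Finsupp.sum_single_index]
  simp

lemma twistedMul_single_single (g h : G) (s t : R) :
    twistedMul c (Finsupp.single g s) (Finsupp.single h t)
      = Finsupp.single (g * h) ((c g h : R) * s * t) := by
  classical
  rw [twistedMul_single_left, Finsupp.sum_single_index]
  simp

lemma twistedMul_smul_left (s : R) (f g : G →₀ R) :
    twistedMul c (s • f) g = s • twistedMul c f g := by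
  classical
  rw [twistedMul, twistedMul, Finsupp.sum_smul_index', Finsupp.smul_sum]
  · refine Finsupp.sum_congr fun α _ => ?_
    rw [Finsupp.smul_sum]
    refine Finsupp.sum_congr fun β _ => ?_
    rw [Finsupp.smul_single]
    simp only [smul_eq_mul]
    congr 1
    ring
  · intro α; simp

lemma twistedMul_add_left (f f' g : G →₀ R) :
    twistedMul c (f + f') g = twistedMul c f g + twistedMul c f' g := by
  classical
  rw [twistedMul, twistedMul, twistedMul, Finsupp.sum_add_index]
  · intro α _; simp
  · intro α _ r r'
    rw [← Finsupp.sum_add]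
    refine Finsupp.sum_congr fun β _ => ?_
    rw [← Finsupp.single_add]
    congr 1; ring

lemma twistedMul_add_right (f g g' : G →₀ R) :
    twistedMul c f (g + g') = twistedMul c f g + twistedMul c f g' := by
  classical
  rw [twistedMul, twistedMul, twistedMul, ← Finsupp.sum_add]
  refine Finsupp.sum_congr fun α _ => ?_
  rw [Finsupp.sum_add_index]
  · intro β _; simp
  · intro β _ s s'
    rw [← Finsupp.single_add]
    congr 1; ring

lemma twistedMul_one_right (hnorm : IsNormalised c) (f : G →₀ R) (t : R) :
    twistedMul c f (Finsupp.single 1 t) = t • f := by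
  classical
  rw [twistedMul_single_right]
  have h1 : ∀ α : G, ((c α 1 : Rˣ) : R) = 1 := fun α => by rw [(hnorm α).2, Units.val_one]
  calc f.sum (fun α r => Finsupp.single (α * 1) ((c α 1 : R) * r * t))
      = f.sum (fun α r => t • Finsupp.single α r) := by
        refine Finsupp.sum_congr fun α _ => ?_
        rw [h1, Finsupp.smul_single, smul_eq_mul, mul_one, one_mul, mul_comm]
    _ = t • f.sum (fun α r => Finsupp.single α r) := (Finsupp.smul_sum).symm
    _ = t • f := by rw [Finsupp.sum_single]

lemma twistedMul_one_left (hnorm : IsNormalised c) (f : G →₀ R) (s : R) :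
    twistedMul c (Finsupp.single 1 s) f = s • f := by
  classical
  rw [twistedMul_single_left]
  have h1 : ∀ β : G, ((c 1 β : Rˣ) : R) = 1 := fun β => by rw [(hnorm β).1, Units.val_one]
  calc f.sum (fun β r => Finsupp.single (1 * β) ((c 1 β : R) * s * r))
      = f.sum (fun β r => s • Finsupp.single β r) := by
        refine Finsupp.sum_congr fun β _ => ?_
        rw [h1, Finsupp.smul_single, smul_eq_mul, one_mul, one_mul]
    _ = s • f.sum (fun β r => Finsupp.single β r) := (Finsupp.smul_sum).symm
    _ = s • f := by rw [Finsupp.sum_single]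

lemma twistedMul_assoc (hcoc : IsTwoCocycle c) (f g h : G →₀ R) :
    twistedMul c (twistedMul c f g) h = twistedMul c f (twistedMul c g h) := by
  induction h using Finsupp.induction with
  | zero => simp [twistedMul_zero_right]
  | single_add γ t h _ _ ihh =>
    rw [twistedMul_add_right, twistedMul_add_right, twistedMul_add_right, ihh]
    congr 1
    clear ihh
    induction g using Finsupp.induction with
    | zero => simp [twistedMul_zero_left, twistedMul_zero_right]
    | single_add β s g _ _ ihg =>
      rw [twistedMul_add_right, twistedMul_add_left, twistedMul_add_left,
        twistedMul_add_right, ihg]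
      congr 1
      clear ihg
      induction f using Finsupp.induction with
      | zero => simp [twistedMul_zero_left]
      | single_add α r f _ _ ihf =>
        rw [twistedMul_add_left, twistedMul_add_left, twistedMul_add_left, ihf]
        congr 1
        rw [twistedMul_single_single, twistedMul_single_single,
            twistedMul_single_single, twistedMul_single_single, mul_assoc]
        have hc : ((c α β : R)) * (c (α * β) γ : R) = (c α (β * γ) : R) * (c β γ : R) := by
          have h := congrArg (Units.val) (hcoc α β γ)
          push_cast at h
          exact h
        congr 1
        linear_combination (r * s * t) * hc

lemma twistedMul_single_left_apply (g : G) (s : R) (f : G →₀ R) (x : G) :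
    twistedMul c (Finsupp.single g s) f x = (c g (g⁻¹ * x) : R) * s * f (g⁻¹ * x) := by
  classical
  rw [twistedMul_single_left, Finsupp.sum_apply, Finsupp.sum]
  rw [Finset.sum_eq_single (g⁻¹ * x)]
  · rw [Finsupp.single_apply, if_pos (by group)]
  · intro b _ hb
    rw [Finsupp.single_apply, if_neg (fun h => hb (by rw [← h]; group))]
  · intro hb
    rw [Finsupp.notMem_support_iff.mp hb, Finsupp.single_apply]
    split <;> ring

lemma twistedMul_single_right_apply (f : G →₀ R) (h : G) (t : R) (x : G) :
    twistedMul c f (Finsupp.single h t) x = (c (x * h⁻¹) h : R) * f (x * h⁻¹) * t := by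
  classical
  rw [twistedMul_single_right, Finsupp.sum_apply, Finsupp.sum]
  rw [Finset.sum_eq_single (x * h⁻¹)]
  · rw [Finsupp.single_apply, if_pos (by group)]
  · intro b _ hb
    rw [Finsupp.single_apply, if_neg (fun h' => hb (by rw [← h']; group))]
  · intro hb
    rw [Finsupp.notMem_support_iff.mp hb, Finsupp.single_apply]
    split <;> ring

lemma cocycle_inv_comm (hcoc : IsTwoCocycle c) (hnorm : IsNormalised c) (g : G) :
    c g g⁻¹ = c g⁻¹ g := by
  have h := hcoc g g⁻¹ g
  rw [mul_inv_cancel, inv_mul_cancel, (hnorm g).1, (hnorm g).2, mul_one, one_mul] at h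
  exact h

end Helpers

/-- in a twisted group ring over an indecomposable commutative ring, with
`B = R·δ₁` and `P(f) = f(1)·δ₁`, the expectation `P` is implemented by idempotents iff
every unit of `R(G,c)` is trivial. -/
theorem implemented_by_idempotents_iff_trivial_units {G : Type*} [Group G]
    {R : Type*} [CommRing R]
    (hInd : ∀ e : R, IsIdempotentElem e → e = 0 ∨ e = 1)
    (c : G → G → Rˣ) (hcoc : IsTwoCocycle c) (hnorm : IsNormalised c) :
    (∀ n : G →₀ R,
        (∃ k : G →₀ R,
          twistedMul c (twistedMul c k n) k = k ∧
          twistedMul c (twistedMul c n k) n = n ∧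
          ∀ b : G →₀ R, (∃ t : R, b = Finsupp.single 1 t) →
            (∃ t : R, twistedMul c (twistedMul c k b) n = Finsupp.single 1 t) ∧
            (∃ t : R, twistedMul c (twistedMul c n b) k = Finsupp.single 1 t)) →
        ∃ e : G →₀ R, (∃ t : R, e = Finsupp.single 1 t) ∧ twistedMul c e e = e ∧
          Finsupp.single 1 (n 1) = twistedMul c n e ∧
          Finsupp.single 1 (n 1) = twistedMul c e n) ↔
      (∀ a b : G →₀ R, twistedMul c a b = Finsupp.single 1 1 →
          twistedMul c b a = Finsupp.single 1 1 →
          ∃ (t : Rˣ) (g : G), a = Finsupp.single g (t : R)) := by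
  classical
  have hone : ∀ f : G →₀ R, twistedMul c f (Finsupp.single 1 (1:R)) = f := fun f => by
    rw [twistedMul_one_right c hnorm, one_smul]
  have hone' : ∀ f : G →₀ R, twistedMul c (Finsupp.single 1 (1:R)) f = f := fun f => by
    rw [twistedMul_one_left c hnorm, one_smul]
  constructor
  · -- implemented by idempotents ⇒ trivial units
    intro H a b hab hba
    by_cases hR : (1 : R) = 0
    · haveI : Subsingleton R := subsingleton_of_zero_eq_one hR.symm
      exact ⟨1, 1, by ext g; exact Subsingleton.elim _ _⟩
    · have ha0 : a ≠ 0 := by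
        intro h
        rw [h, twistedMul_zero_left] at hab
        have h1 := DFunLike.congr_fun hab 1
        rw [Finsupp.coe_zero, Pi.zero_apply, Finsupp.single_eq_same] at h1
        exact hR h1.symm
      obtain ⟨g₀, hg₀⟩ := Finsupp.ne_iff.mp ha0
      rw [Finsupp.coe_zero, Pi.zero_apply] at hg₀
      set v : R := (((c g₀⁻¹ g₀)⁻¹ : Rˣ) : R) with hv
      set d : G →₀ R := Finsupp.single g₀⁻¹ 1 with hd
      set d' : G →₀ R := Finsupp.single g₀ v with hd'
      have hdd' : twistedMul c d d' = Finsupp.single 1 1 := by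
        rw [hd, hd', twistedMul_single_single, inv_mul_cancel]
        congr 1
        rw [hv, mul_one]
        exact Units.mul_inv _
      have hd'd : twistedMul c d' d = Finsupp.single 1 1 := by
        rw [hd, hd', twistedMul_single_single, mul_inv_cancel]
        congr 1
        rw [cocycle_inv_comm c hcoc hnorm g₀, hv, mul_one]
        exact Units.mul_inv _
      set n : G →₀ R := twistedMul c a d with hn
      set k : G →₀ R := twistedMul c d' b with hk
      have hnk : twistedMul c n k = Finsupp.single 1 1 := by
        rw [hn, hk, twistedMul_assoc c hcoc, ← twistedMul_assoc c hcoc d d' b, hdd',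
          hone', hab]
      have hkn : twistedMul c k n = Finsupp.single 1 1 := by
        rw [hn, hk, twistedMul_assoc c hcoc, ← twistedMul_assoc c hcoc b a d, hba,
          hone', hd'd]
      have hmem : ∀ b' : G →₀ R, (∃ t : R, b' = Finsupp.single 1 t) →
          (∃ t : R, twistedMul c (twistedMul c k b') n = Finsupp.single 1 t) ∧
          (∃ t : R, twistedMul c (twistedMul c n b') k = Finsupp.single 1 t) := by
        rintro b' ⟨t, rfl⟩
        constructor
        · exact ⟨t, by
            rw [twistedMul_one_right c hnorm, twistedMul_smul_left, hkn, Finsupp.smul_single]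
            simp⟩
        · exact ⟨t, by
            rw [twistedMul_one_right c hnorm, twistedMul_smul_left, hnk, Finsupp.smul_single]
            simp⟩
      have hc1 : twistedMul c (twistedMul c k n) k = k := by rw [hkn]; exact hone' k
      have hc2 : twistedMul c (twistedMul c n k) n = n := by rw [hnk]; exact hone' n
      obtain ⟨e, ⟨te, hte⟩, hee, hne, -⟩ := H n ⟨k, hc1, hc2, hmem⟩
      subst hte
      have hte2 : te * te = te := by
        rw [twistedMul_single_single] at hee
        have h1 : ((c (1:G) 1 : Rˣ) : R) = 1 := by rw [(hnorm 1).1, Units.val_one]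
        rw [one_mul, h1, one_mul] at hee
        exact Finsupp.single_injective 1 hee
      rcases hInd te hte2 with h0 | h1
      · exfalso
        rw [h0, Finsupp.single_zero, twistedMul_zero_right] at hne
        have hn1 : n 1 = 0 := Finsupp.single_eq_zero.mp hne
        have hval : n 1 = (c g₀ g₀⁻¹ : R) * a g₀ := by
          rw [hn, hd, twistedMul_single_right_apply]
          rw [inv_inv, one_mul, mul_one]
        apply hg₀
        have hz : (c g₀ g₀⁻¹ : R) * a g₀ = 0 := hval ▸ hn1
        calc a g₀ = (((c g₀ g₀⁻¹)⁻¹ : Rˣ) : R) * ((c g₀ g₀⁻¹ : R) * a g₀) := by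
              rw [← mul_assoc, Units.inv_mul, one_mul]
          _ = 0 := by rw [hz, mul_zero]
      · rw [h1] at hne
        rw [hone] at hne
        have hand' : twistedMul c n d' = a := by
          rw [hn, twistedMul_assoc c hcoc, hdd', hone]
        have ha : a = Finsupp.single g₀ ((n 1) * v) := by
          conv_lhs => rw [← hand']
          conv_lhs => rw [← hne]
          rw [twistedMul_one_left c hnorm, hd', Finsupp.smul_single]
          simp only [smul_eq_mul]
        have hb1 : twistedMul c (Finsupp.single g₀ ((n 1) * v)) b = Finsupp.single 1 1 := by
          rw [← ha]; exact hab
        have h1' := DFunLike.congr_fun hb1 1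
        rw [twistedMul_single_left_apply, Finsupp.single_eq_same] at h1'
        have hunit : IsUnit ((n 1) * v) :=
          IsUnit.of_mul_eq_one ((c g₀ (g₀⁻¹ * 1) : R) * b (g₀⁻¹ * 1)) (by
            linear_combination h1')
        obtain ⟨u, hu⟩ := hunit
        exact ⟨u, g₀, by rw [ha, hu]⟩
  · -- trivial units ⇒ implemented by idempotents
    intro H n hNn
    obtain ⟨k, hknk, hnkn, hB⟩ := hNn
    obtain ⟨s, hs⟩ := (hB (Finsupp.single 1 1) ⟨1, rfl⟩).1
    obtain ⟨t, ht⟩ := (hB (Finsupp.single 1 1) ⟨1, rfl⟩).2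
    rw [twistedMul_one_right c hnorm, one_smul] at hs ht
    -- hs : twistedMul c k n = single 1 s ; ht : twistedMul c n k = single 1 t
    have htn : t • n = n := by
      conv_rhs => rw [← hnkn]
      rw [ht, twistedMul_one_left c hnorm]
    have ht2 : t * t = t := by
      have h2 : twistedMul c n k = Finsupp.single 1 (t * t) := by
        conv_lhs => rw [← htn]
        rw [twistedMul_smul_left, ht, Finsupp.smul_single]
        simp only [smul_eq_mul]
      rw [ht] at h2
      exact (Finsupp.single_injective 1 h2).symm
    rcases hInd t ht2 with ht0 | ht1
    · -- t = 0 : n = 0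
      rw [ht0, Finsupp.single_zero] at ht
      have hn0 : n = 0 := by rw [← hnkn, ht, twistedMul_zero_left]
      refine ⟨0, ⟨0, (Finsupp.single_zero 1).symm⟩, twistedMul_zero_left c 0, ?_, ?_⟩
      · rw [twistedMul_zero_right, hn0]; simp
      · rw [twistedMul_zero_left, hn0]; simp
    · rw [ht1] at ht
      have hsk : s • k = k := by
        conv_rhs => rw [← hknk]
        rw [hs, twistedMul_one_left c hnorm]
      have hs2 : s * s = s := by
        have h2 : twistedMul c k n = Finsupp.single 1 (s * s) := by
          conv_lhs => rw [← hsk]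
          rw [twistedMul_smul_left, hs, Finsupp.smul_single]
          simp only [smul_eq_mul]
        rw [hs] at h2
        exact (Finsupp.single_injective 1 h2).symm
      rcases hInd s hs2 with hs0 | hs1
      · -- s = 0 : k = 0 hence n = 0
        rw [hs0, Finsupp.single_zero] at hs
        have hk0 : k = 0 := by rw [← hknk, hs, twistedMul_zero_left]
        have hnk0 : twistedMul c n k = 0 := by rw [hk0, twistedMul_zero_right]
        have hn0 : n = 0 := by rw [← hnkn, hnk0, twistedMul_zero_left]
        refine ⟨0, ⟨0, (Finsupp.single_zero 1).symm⟩, twistedMul_zero_left c 0, ?_, ?_⟩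
        · rw [twistedMul_zero_right, hn0]; simp
        · rw [twistedMul_zero_left, hn0]; simp
      · rw [hs1] at hs
        obtain ⟨u, g, hng⟩ := H n k ht hs
        by_cases hg : g = 1
        · subst hg
          refine ⟨Finsupp.single 1 1, ⟨1, rfl⟩, ?_, ?_, ?_⟩
          · rw [twistedMul_single_single, (hnorm 1).1]
            simp
          · rw [twistedMul_one_right c hnorm, one_smul, hng, Finsupp.single_eq_same]
          · rw [twistedMul_one_left c hnorm, one_smul, hng, Finsupp.single_eq_same]
        · refine ⟨0, ⟨0, (Finsupp.single_zero 1).symm⟩, twistedMul_zero_left c 0, ?_, ?_⟩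
          · rw [twistedMul_zero_right, hng, Finsupp.single_apply, if_neg hg,
              Finsupp.single_zero]
          · rw [twistedMul_zero_left, hng, Finsupp.single_apply, if_neg hg,
              Finsupp.single_zero]
end
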